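/- Suppose the constants satisfy the hierarchy 1/n ≪ ε ≪ ε₁ ≪ η₁ ≪ τ ≪ 1. Let G be a digraph on n vertices with δ⁰(G) ≥ n/2 and suppose A, B, S, T is a partition of V(G) satisfying (R0)–(R9). Let L₁ and L₂ be oriented paths of length 8. Then G contains disjoint copies L₁^G of L₁ and L₂^G of L₂ such that each L_i^G is a useful path. Furthermore, for each i one may prescribe in advance whether L_i^G is an AB-path or a BA-path. -/

import Mathlib

open Finset

open scoped Classical

noncomputable section

variable {n : ℕ}

/-- Number of outneighbours of `x` lying in `X`, in the digraph with edge set `G`. -/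
def dPlus (G : Finset (Fin n × Fin n)) (X : Finset (Fin n)) (x : Fin n) : ℕ :=
  (G.filter fun e => e.1 = x ∧ e.2 ∈ X).card

/-- Number of inneighbours of `x` lying in `X`. -/
def dMinus (G : Finset (Fin n × Fin n)) (X : Finset (Fin n)) (x : Fin n) : ℕ :=
  (G.filter fun e => e.2 = x ∧ e.1 ∈ X).card

/-- The minimum semidegree of `G` is at least `r`. -/
def MinSemi (G : Finset (Fin n × Fin n)) (r : ℝ) : Prop :=
  ∀ x : Fin n, r ≤ (dPlus G Finset.univ x : ℝ) ∧ r ≤ (dMinus G Finset.univ x : ℝ)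

/-- `A, B, S, T` is a partition of the vertex set. -/
def Partition4 (A B S T : Finset (Fin n)) : Prop :=
  A ∪ B ∪ S ∪ T = Finset.univ ∧ Disjoint A B ∧ Disjoint A S ∧ Disjoint A T ∧
    Disjoint B S ∧ Disjoint B T ∧ Disjoint S T

/-- An embedding into `G` of the oriented path with `ℓ` edges whose `i`-th edge is
forward iff `p i` (only `i < ℓ` is relevant). -/
def PathEmbed (G : Finset (Fin n × Fin n)) (p : ℕ → Bool) (ℓ : ℕ) (f : ℕ → Fin n) : Prop :=
  Set.InjOn f (Set.Iic ℓ) ∧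
    ∀ i < ℓ, if p i then (f i, f (i + 1)) ∈ G else (f (i + 1), f i) ∈ G

/-- The orientation of the subpath of the cycle `c` starting at vertex `j`. -/
def cycArc (c : ZMod n → Bool) (j : ZMod n) : ℕ → Bool := fun i => c (j + (i : ZMod n))

/-- The list of vertices `f 0, f 1, …, f ℓ` of an embedded path. -/
def vList (f : ℕ → Fin n) (ℓ : ℕ) : List (Fin n) := (List.range (ℓ + 1)).map f

/-- The number of repeated `A`s of a path in `G` (with vertex list `l`): consecutive
pairs of vertices of `A ∪ B` along the path which both lie in `A`. -/
def repA (A B : Finset (Fin n)) (l : List (Fin n)) : ℕ :=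
  let ab := l.filter fun v => decide (v ∈ A ∪ B)
  (ab.zip ab.tail).countP fun q => decide (q.1 ∈ A ∧ q.2 ∈ A)

/-- The number of repeated `B`s of a path with vertex list `l`. -/
def repB (A B : Finset (Fin n)) (l : List (Fin n)) : ℕ :=
  let ab := l.filter fun v => decide (v ∈ A ∪ B)
  (ab.zip ab.tail).countP fun q => decide (q.1 ∈ B ∧ q.2 ∈ B)

/-- Property (R0): `a ≤ b` and `s ≤ t`. -/
def R0 (A B S T : Finset (Fin n)) : Prop := A.card ≤ B.card ∧ S.card ≤ T.card

/-- Properties (R1)–(R9) of an `ABST`-extremal partition. -/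
def Rconds (G : Finset (Fin n × Fin n)) (A B S T : Finset (Fin n))
    (ε ε₁ η₁ τ : ℝ) : Prop :=
  -- (R1)
  (τ * n ≤ (A.card : ℝ) ∧ τ * n ≤ (B.card : ℝ) ∧ τ * n ≤ (S.card : ℝ) ∧
    τ * n ≤ (T.card : ℝ)) ∧
  -- (R2)
  (|(A.card : ℝ) - (B.card : ℝ)| ≤ ε₁ * n ∧ |(S.card : ℝ) - (T.card : ℝ)| ≤ ε₁ * n) ∧
  -- (R3)
  ((∀ x ∈ A, η₁ * n ≤ (dPlus G B x : ℝ) ∧ η₁ * n ≤ (dMinus G B x : ℝ)) ∧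
    (∀ x ∈ B, η₁ * n ≤ (dPlus G A x : ℝ) ∧ η₁ * n ≤ (dMinus G A x : ℝ))) ∧
  -- (R4)
  (∀ x ∈ S, η₁ * n ≤ (dPlus G (B ∪ S) x : ℝ) ∧ η₁ * n ≤ (dMinus G (A ∪ S) x : ℝ)) ∧
  -- (R5)
  (∀ x ∈ T, η₁ * n ≤ (dPlus G (A ∪ T) x : ℝ) ∧ η₁ * n ≤ (dMinus G (B ∪ T) x : ℝ)) ∧
  -- (R6)
  (((A.filter fun x => ¬((B.card : ℝ) - ε ^ ((1 : ℝ) / 3) * n ≤ (dPlus G B x : ℝ) ∧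
      (B.card : ℝ) - ε ^ ((1 : ℝ) / 3) * n ≤ (dMinus G B x : ℝ))).card : ℝ) ≤ ε₁ * n) ∧
  -- (R7)
  (((B.filter fun x => ¬((A.card : ℝ) - ε ^ ((1 : ℝ) / 3) * n ≤ (dPlus G A x : ℝ) ∧
      (A.card : ℝ) - ε ^ ((1 : ℝ) / 3) * n ≤ (dMinus G A x : ℝ))).card : ℝ) ≤ ε₁ * n) ∧
  -- (R8)
  (((S.filter fun x =>
      ¬((B.card : ℝ) + (S.card : ℝ) - ε ^ ((1 : ℝ) / 3) * n ≤ (dPlus G (B ∪ S) x : ℝ) ∧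
        (A.card : ℝ) + (S.card : ℝ) - ε ^ ((1 : ℝ) / 3) * n ≤
          (dMinus G (A ∪ S) x : ℝ))).card : ℝ) ≤ ε₁ * n) ∧
  -- (R9)
  (((T.filter fun x =>
      ¬((A.card : ℝ) + (T.card : ℝ) - ε ^ ((1 : ℝ) / 3) * n ≤ (dPlus G (A ∪ T) x : ℝ) ∧
        (B.card : ℝ) + (T.card : ℝ) - ε ^ ((1 : ℝ) / 3) * n ≤
          (dMinus G (B ∪ T) x : ℝ))).card : ℝ) ≤ ε₁ * n)

/-- A useful `AB`-path: the embedded path of length `m` starts in `A`, ends in `B`, has no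
repeated `A`s or `B`s, and uses an odd number of vertices of `S ∪ T`. -/
def UsefulAB (A B S T : Finset (Fin n)) (m : ℕ) (g : ℕ → Fin n) : Prop :=
  g 0 ∈ A ∧ g m ∈ B ∧ repA A B (vList g m) = 0 ∧ repB A B (vList g m) = 0 ∧
    Odd (((S ∪ T) ∩ (Finset.range (m + 1)).image g).card)

/-- A useful `BA`-path. -/
def UsefulBA (A B S T : Finset (Fin n)) (m : ℕ) (g : ℕ → Fin n) : Prop :=
  g 0 ∈ B ∧ g m ∈ A ∧ repA A B (vList g m) = 0 ∧ repB A B (vList g m) = 0 ∧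
    Odd (((S ∪ T) ∩ (Finset.range (m + 1)).image g).card)

namespace Stmt18

variable {n : ℕ}

/-- edge in the direction prescribed by `q i`. -/
def edgeAt (G : Finset (Fin n × Fin n)) (q : ℕ → Bool) (i : ℕ) (x y : Fin n) : Prop :=
  if q i then (x, y) ∈ G else (y, x) ∈ G

/-- alternating boolean sequence starting with `c`. -/
def altc (c : Bool) (i : ℕ) : Bool := if i % 2 = 0 then c else !c

lemma altc_succ (c : Bool) (i : ℕ) : altc c (i + 1) = !(altc c i) := by
  rcases Nat.even_or_odd i with h | h
  · have h0 : i % 2 = 0 := Nat.even_iff.mp h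
    have h1 : (i + 1) % 2 = 1 := by omega
    simp [altc, h0, h1]
  · have h0 : i % 2 = 1 := Nat.odd_iff.mp h
    have h1 : (i + 1) % 2 = 0 := by omega
    simp [altc, h0, h1]

lemma altc_zero (c : Bool) : altc c 0 = c := rfl

/-- class-match of a vertex with an optional label. -/
def clM (A B S T : Finset (Fin n)) (x : Fin n) : Option Bool → Prop
  | some true => x ∈ A ∧ x ∉ B ∧ x ∉ S ∧ x ∉ T
  | some false => x ∈ B ∧ x ∉ A ∧ x ∉ S ∧ x ∉ T
  | none => (x ∈ S ∪ T) ∧ x ∉ A ∧ x ∉ B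

lemma dPlus_eq (G : Finset (Fin n × Fin n)) (X : Finset (Fin n)) (x : Fin n) :
    dPlus G X x = (X.filter fun y => (x, y) ∈ G).card := by
  classical
  unfold dPlus
  apply Finset.card_bij (fun e _ => e.2)
  · intro e he
    simp only [Finset.mem_filter] at he ⊢
    obtain ⟨heG, he1, he2⟩ := he
    refine ⟨he2, ?_⟩
    have : (x, e.2) = e := by
      obtain ⟨a, b⟩ := e; simp_all
    rwa [this]
  · intro e1 h1 e2 h2 hs
    simp only [Finset.mem_filter] at h1 h2
    obtain ⟨a1, b1⟩ := e1; obtain ⟨a2, b2⟩ := e2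
    simp_all
  · intro y hy
    simp only [Finset.mem_filter] at hy
    exact ⟨(x, y), by simp [Finset.mem_filter, hy.1, hy.2], rfl⟩

lemma dMinus_eq (G : Finset (Fin n × Fin n)) (X : Finset (Fin n)) (x : Fin n) :
    dMinus G X x = (X.filter fun y => (y, x) ∈ G).card := by
  classical
  unfold dMinus
  apply Finset.card_bij (fun e _ => e.1)
  · intro e he
    simp only [Finset.mem_filter] at he ⊢
    obtain ⟨heG, he2, he1⟩ := he
    refine ⟨he1, ?_⟩
    have : (e.1, x) = e := by
      obtain ⟨a, b⟩ := e; simp_all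
    rwa [this]
  · intro e1 h1 e2 h2 hs
    simp only [Finset.mem_filter] at h1 h2
    obtain ⟨a1, b1⟩ := e1; obtain ⟨a2, b2⟩ := e2
    simp_all
  · intro y hy
    simp only [Finset.mem_filter] at hy
    exact ⟨(y, x), by simp [Finset.mem_filter, hy.1, hy.2], rfl⟩

lemma pick_avoid (D P : Finset (Fin n)) (h : P.card < D.card) : ∃ x, x ∈ D ∧ x ∉ P := by
  by_contra hc
  push_neg at hc
  exact absurd (Finset.card_le_card fun x hx => hc x hx) (by omega)

lemma filter_restrict (X X' : Finset (Fin n)) (hX : X' ⊆ X) (p : Fin n → Prop)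
    [DecidablePred p] :
    (X.filter p).card ≤ (X'.filter p).card + (X \ X').card := by
  classical
  have hsub : X.filter p ⊆ X'.filter p ∪ (X \ X') := by
    intro y hy
    simp only [Finset.mem_filter, Finset.mem_union, Finset.mem_sdiff] at *
    by_cases h : y ∈ X'
    · exact Or.inl ⟨h, hy.2⟩
    · exact Or.inr ⟨hy.1, h⟩
  calc (X.filter p).card ≤ _ := Finset.card_le_card hsub
    _ ≤ _ := Finset.card_union_le _ _

lemma keyle (X X' : Finset (Fin n)) (p : Fin n → Prop) [DecidablePred p] {c : ℝ}
    (hs : X' ⊆ X) (hb : ((X \ X').card : ℝ) ≤ c) :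
    ((X.filter p).card : ℝ) - c ≤ ((X'.filter p).card : ℝ) := by
  have h1 := filter_restrict X X' hs p
  have h2 : ((X.filter p).card : ℝ) ≤ ((X'.filter p).card : ℝ) + ((X \ X').card : ℝ) := by
    exact_mod_cast h1
  linarith

lemma countP_zip_tail {α : Type*} (p : α × α → Bool) :
    ∀ (l : List α), (∀ (i : ℕ) (h : i + 1 < l.length),
        p (l[i]'(by omega), l[i+1]'h) = false) →
      (l.zip l.tail).countP p = 0
  | [], _ => rfl
  | [a], _ => rfl
  | a :: b :: t, h => by
    have h0 : p (a, b) = false := h 0 (by simp)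
    have ht : ((b :: t).zip t).countP p = 0 := by
      have := countP_zip_tail p (b :: t) (fun i hi => by
        have := h (i + 1) (by simpa using Nat.succ_lt_succ hi)
        simpa using this)
      simpa using this
    simpa [List.countP_cons, h0] using ht

/-- relation between a vertex and an optional class label. -/
def labRel (A B : Finset (Fin n)) (x : Fin n) : Option Bool → Prop
  | some true => x ∈ A ∧ x ∉ B
  | some false => x ∈ B ∧ x ∉ A
  | none => x ∉ A ∧ x ∉ B

lemma filter_forall₂ (A B : Finset (Fin n)) :
    ∀ (l : List (Fin n)) (ol : List (Option Bool)), List.Forall₂ (labRel A B) l ol →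
      List.Forall₂ (fun x c => (x ∈ A ↔ c = true) ∧ (x ∈ B ↔ c = false))
        (l.filter fun v => decide (v ∈ A ∪ B)) ol.reduceOption := by
  intro l ol h
  induction h with
  | nil => simp
  | @cons x o l' ol' hr hrest ih =>
    match o, hr with
    | some true, ⟨hA, hnB⟩ =>
      have hd : decide (x ∈ A ∪ B) = true := by simp [Finset.mem_union, hA]
      simp only [List.filter_cons, hd, if_true, List.reduceOption_cons_of_some]
      exact List.Forall₂.cons ⟨by simp [hA], by simp [hnB]⟩ ih
    | some false, ⟨hB, hnA⟩ =>
      have hd : decide (x ∈ A ∪ B) = true := by simp [Finset.mem_union, hB]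
      simp only [List.filter_cons, hd, if_true, List.reduceOption_cons_of_some]
      exact List.Forall₂.cons ⟨by simp [hnA], by simp [hB]⟩ ih
    | none, ⟨hnA, hnB⟩ =>
      have hd : decide (x ∈ A ∪ B) = false := by simp [Finset.mem_union, hnA, hnB]
      simpa only [List.filter_cons, hd, Bool.false_eq_true, if_false,
        List.reduceOption_cons_of_none] using ih

lemma rep_eq_zero (A B : Finset (Fin n)) (l : List (Fin n)) (ol : List (Option Bool))
    (hf : List.Forall₂ (labRel A B) l ol) (c : Bool) (M : ℕ)
    (hred : ol.reduceOption = (List.range M).map (altc c)) :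
    repA A B l = 0 ∧ repB A B l = 0 := by
  classical
  have h2 := filter_forall₂ A B l ol hf
  rw [hred] at h2
  set ab := l.filter fun v => decide (v ∈ A ∪ B) with hab
  have hlen : ab.length = M := by simpa using h2.length_eq
  have hget : ∀ (i : ℕ) (h : i < ab.length),
      ((ab[i]'h) ∈ A ↔ altc c i = true) ∧ ((ab[i]'h) ∈ B ↔ altc c i = false) := by
    intro i h
    have hg := List.forall₂_iff_get.mp h2
    have := hg.2 i h (by simp only [List.length_map, List.length_range]; omega)
    simpa using this
  constructor
  · show (ab.zip ab.tail).countP _ = 0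
    apply countP_zip_tail
    intro i hi
    apply decide_eq_false
    rintro ⟨ha1, ha2⟩
    have e1 := (hget i (by omega)).1.mp ha1
    have e2 := (hget (i+1) hi).1.mp ha2
    rw [altc_succ, e1] at e2
    simp at e2
  · show (ab.zip ab.tail).countP _ = 0
    apply countP_zip_tail
    intro i hi
    apply decide_eq_false
    rintro ⟨ha1, ha2⟩
    have e1 := (hget i (by omega)).2.mp ha1
    have e2 := (hget (i+1) hi).2.mp ha2
    rw [altc_succ, e1] at e2
    simp at e2

end Stmt18

namespace Stmt18

variable {n : ℕ}

/-- Context holding the partition, typical subsets and all robustness facts. -/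
structure Ctx (n : ℕ) (G : Finset (Fin n × Fin n)) where
  A : Finset (Fin n)
  B : Finset (Fin n)
  S : Finset (Fin n)
  T : Finset (Fin n)
  A' : Finset (Fin n)
  B' : Finset (Fin n)
  S' : Finset (Fin n)
  T' : Finset (Fin n)
  hA' : A' ⊆ A
  hB' : B' ⊆ B
  hS' : S' ⊆ S
  hT' : T' ⊆ T
  hAB : Disjoint A B
  hAS : Disjoint A S
  hAT : Disjoint A T
  hBS : Disjoint B S
  hBT : Disjoint B T
  hST : Disjoint S T
  cardS' : 100 ≤ S'.card
  cardT' : 100 ≤ T'.card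
  stepA : ∀ x ∈ A', ∀ d : Bool,
    100 ≤ (B'.filter fun y => if d then (x, y) ∈ G else (y, x) ∈ G).card
  stepB : ∀ x ∈ B', ∀ d : Bool,
    100 ≤ (A'.filter fun y => if d then (x, y) ∈ G else (y, x) ∈ G).card
  sInA : ∀ v ∈ S', 100 ≤ (A'.filter fun z => (z, v) ∈ G).card
  sInS : ∀ v ∈ S', 100 ≤ (S'.filter fun z => (z, v) ∈ G).card
  sOutB : ∀ v ∈ S', 100 ≤ (B'.filter fun z => (v, z) ∈ G).card
  sOutS : ∀ v ∈ S', 100 ≤ (S'.filter fun z => (v, z) ∈ G).card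
  tInB : ∀ v ∈ T', 100 ≤ (B'.filter fun z => (z, v) ∈ G).card
  tInT : ∀ v ∈ T', 100 ≤ (T'.filter fun z => (z, v) ∈ G).card
  tOutA : ∀ v ∈ T', 100 ≤ (A'.filter fun z => (v, z) ∈ G).card
  tOutT : ∀ v ∈ T', 100 ≤ (T'.filter fun z => (v, z) ∈ G).card
  bOutA : ∀ w ∈ B, 100 ≤ (A'.filter fun z => (w, z) ∈ G).card
  aOutB : ∀ w ∈ A, 100 ≤ (B'.filter fun z => (w, z) ∈ G).card
  sOut2 : ∀ w ∈ S,
    200 ≤ (B'.filter fun z => (w, z) ∈ G).card + (S'.filter fun z => (w, z) ∈ G).card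
  tOut2 : ∀ w ∈ T,
    200 ≤ (A'.filter fun z => (w, z) ∈ G).card + (T'.filter fun z => (w, z) ∈ G).card

variable {G : Finset (Fin n × Fin n)}

/-- The mirrored context, exchanging `A ↔ B` and `S ↔ T`. -/
def Ctx.swap (C : Ctx n G) : Ctx n G where
  A := C.B
  B := C.A
  S := C.T
  T := C.S
  A' := C.B'
  B' := C.A'
  S' := C.T'
  T' := C.S'
  hA' := C.hB'
  hB' := C.hA'
  hS' := C.hT'
  hT' := C.hS'
  hAB := C.hAB.symm
  hAS := C.hBT
  hAT := C.hBS
  hBS := C.hAT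
  hBT := C.hAS
  hST := C.hST.symm
  cardS' := C.cardT'
  cardT' := C.cardS'
  stepA := C.stepB
  stepB := C.stepA
  sInA := C.tInB
  sInS := C.tInT
  sOutB := C.tOutA
  sOutS := C.tOutT
  tInB := C.sInA
  tInT := C.sInS
  tOutA := C.sOutB
  tOutT := C.sOutS
  bOutA := C.aOutB
  aOutB := C.bOutA
  sOut2 := C.tOut2
  tOut2 := C.sOut2

def Ctx.typ (C : Ctx n G) (c : Bool) : Finset (Fin n) := if c then C.A' else C.B'

lemma Ctx.typ_clM (C : Ctx n G) {x : Fin n} {c : Bool} (h : x ∈ C.typ c) :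
    clM C.A C.B C.S C.T x (some c) := by
  cases c
  · simp only [Ctx.typ, Bool.false_eq_true, if_false] at h
    have hB := C.hB' h
    exact ⟨hB, Finset.disjoint_right.mp C.hAB hB,
      fun hS => Finset.disjoint_left.mp C.hBS hB hS,
      fun hT => Finset.disjoint_left.mp C.hBT hB hT⟩
  · simp only [Ctx.typ, if_true] at h
    have hA := C.hA' h
    exact ⟨hA, Finset.disjoint_left.mp C.hAB hA,
      fun hS => Finset.disjoint_left.mp C.hAS hA hS,
      fun hT => Finset.disjoint_left.mp C.hAT hA hT⟩

lemma Ctx.s_clM (C : Ctx n G) {x : Fin n} (h : x ∈ C.S) :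
    clM C.A C.B C.S C.T x none :=
  ⟨Finset.mem_union_left _ h, fun hA => Finset.disjoint_left.mp C.hAS hA h,
    fun hB => Finset.disjoint_left.mp C.hBS hB h⟩

lemma Ctx.t_clM (C : Ctx n G) {x : Fin n} (h : x ∈ C.T) :
    clM C.A C.B C.S C.T x none :=
  ⟨Finset.mem_union_right _ h, fun hA => Finset.disjoint_left.mp C.hAT hA h,
    fun hB => Finset.disjoint_left.mp C.hBT hB h⟩

lemma ext_right (C : Ctx n G) (q : ℕ → Bool) (off : ℕ) :
    ∀ (m : ℕ) (u : Fin n) (cu : Bool), u ∈ C.typ cu → ∀ P : Finset (Fin n),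
      P.card + m ≤ 80 →
      ∃ f : ℕ → Fin n, f 0 = u ∧ (∀ i ≤ m, f i ∈ C.typ (altc cu i)) ∧
        (∀ i, 1 ≤ i → i ≤ m → f i ∉ P) ∧
        (∀ i < m, edgeAt G q (off + i) (f i) (f (i + 1))) ∧
        (∀ i ≤ m, ∀ j ≤ m, i ≠ j → f i ≠ f j) := by
  intro m
  induction m with
  | zero =>
    intro u cu hu P _
    refine ⟨fun _ => u, rfl, ?_, by omega, by omega, by omega⟩
    intro i hi
    interval_cases i
    simpa [altc_zero] using hu
  | succ m ih =>
    intro u cu hu P hP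
    obtain ⟨f, hf0, hcl, hPf, hedge, hinj⟩ := ih u cu hu P (by omega)
    have hfm : f m ∈ C.typ (altc cu m) := hcl m le_rfl
    have hstep : 100 ≤ ((C.typ (!(altc cu m))).filter fun y =>
        if q (off + m) then (f m, y) ∈ G else (y, f m) ∈ G).card := by
      cases hc : altc cu m
      · have := C.stepB (f m) (by simpa [Ctx.typ, hc] using hfm) (q (off + m))
        simpa [Ctx.typ] using this
      · have := C.stepA (f m) (by simpa [Ctx.typ, hc] using hfm) (q (off + m))
        simpa [Ctx.typ] using this
    have hbig : (P ∪ (Finset.range (m + 1)).image f).card <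
        ((C.typ (!(altc cu m))).filter fun y =>
          if q (off + m) then (f m, y) ∈ G else (y, f m) ∈ G).card := by
      have h1 : (P ∪ (Finset.range (m + 1)).image f).card ≤ P.card + (m + 1) := by
        calc (P ∪ (Finset.range (m + 1)).image f).card
            ≤ P.card + ((Finset.range (m + 1)).image f).card := Finset.card_union_le _ _
          _ ≤ P.card + (m + 1) := by
              have := Finset.card_image_le (s := Finset.range (m + 1)) (f := f)
              simp only [Finset.card_range] at this
              omega
      omega
    obtain ⟨y, hyD, hyP⟩ := pick_avoid _ _ hbig
    simp only [Finset.mem_filter] at hyD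
    refine ⟨fun i => if i = m + 1 then y else f i, by simp [hf0], ?_, ?_, ?_, ?_⟩
    · intro i hi
      by_cases h : i = m + 1
      · subst h
        simp only [if_pos rfl]
        rw [altc_succ]
        exact hyD.1
      · simp only [if_neg h]
        exact hcl i (by omega)
    · intro i h1 h2
      by_cases h : i = m + 1
      · simp only [if_pos h]
        intro hc
        exact hyP (Finset.mem_union_left _ hc)
      · simp only [if_neg h]
        exact hPf i h1 (by omega)
    · intro i hi
      by_cases h : i = m
      · have h1 : ¬ i = m + 1 := by omega
        have h2 : i + 1 = m + 1 := by omega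
        simp only [if_neg h1, if_pos h2]
        rw [h]
        simpa [edgeAt] using hyD.2
      · have h1 : ¬ i = m + 1 := by omega
        have h2 : ¬ i + 1 = m + 1 := by omega
        simp only [if_neg h1, if_neg h2]
        exact hedge i (by omega)
    · intro i hi j hj hne
      by_cases h1 : i = m + 1 <;> by_cases h2 : j = m + 1
      · omega
      · simp only [if_pos h1, if_neg h2]
        intro hc
        exact hyP (Finset.mem_union_right _ (Finset.mem_image.mpr
          ⟨j, Finset.mem_range.mpr (by omega), hc.symm⟩))
      · simp only [if_neg h1, if_pos h2]
        intro hc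
        exact hyP (Finset.mem_union_right _ (Finset.mem_image.mpr
          ⟨i, Finset.mem_range.mpr (by omega), hc⟩))
      · simp only [if_neg h1, if_neg h2]
        exact hinj i (by omega) j (by omega) hne

lemma ext_left (C : Ctx n G) (q : ℕ → Bool) (m : ℕ) (u : Fin n) (cu : Bool)
    (hu : u ∈ C.typ cu) (P : Finset (Fin n)) (hP : P.card + m ≤ 80) :
    ∃ f : ℕ → Fin n, f m = u ∧ (∀ i ≤ m, f i ∈ C.typ (altc cu (m - i))) ∧
      (∀ i < m, f i ∉ P) ∧ (∀ i < m, edgeAt G q i (f i) (f (i + 1))) ∧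
      (∀ i ≤ m, ∀ j ≤ m, i ≠ j → f i ≠ f j) := by
  obtain ⟨fR, h0, hcl, hPf, hedge, hinj⟩ :=
    ext_right C (fun j => !(q (m - 1 - j))) 0 m u cu hu P hP
  refine ⟨fun i => fR (m - i), by simpa using h0, ?_, ?_, ?_, ?_⟩
  · intro i hi
    exact hcl (m - i) (by omega)
  · intro i hi
    exact hPf (m - i) (by omega) (by omega)
  · intro i hi
    have h := hedge (m - 1 - i) (by omega)
    have e2 : m - 1 - i + 1 = m - i := by omega
    rw [Nat.zero_add, e2] at h
    show edgeAt G q i (fR (m - i)) (fR (m - (i + 1)))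
    have e1 : m - (i + 1) = m - 1 - i := by omega
    rw [e1]
    have harg : m - 1 - (m - 1 - i) = i := by omega
    simp only [edgeAt] at h ⊢
    simp only [harg] at h
    cases hq : q i <;> simp [hq] at h ⊢ <;> exact h
  · intro i hi j hj hne
    exact hinj (m - i) (by omega) (m - j) (by omega) (by omega)

end Stmt18

namespace Stmt18

variable {n : ℕ} {G : Finset (Fin n × Fin n)}

lemma reduceOption_map_eq {α β : Type*} (l : List α) (f : α → Option β) :
    (l.map f).reduceOption = l.filterMap f := by
  simp [List.reduceOption, List.filterMap_map]

lemma master (C : Ctx n G) (q : ℕ → Bool) (P : Finset (Fin n)) (hP : P.card ≤ 20)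
    (cs ce : ℕ) (hcs : 1 ≤ cs) (hcsce : cs ≤ ce) (hce : ce ≤ 7)
    (h : ℕ → Fin n) (lab : ℕ → Option Bool) (cL cR cH : Bool) (M : ℕ)
    (HlabL : ∀ i ≤ cs - 1, lab i = some (altc cL (cs - 1 - i)))
    (HlabR : ∀ i, ce + 1 ≤ i → i ≤ 8 → lab i = some (altc cR (i - (ce + 1))))
    (HlabC : ∀ i, cs ≤ i → i ≤ ce → clM C.A C.B C.S C.T (h i) (lab i))
    (Hinj : ∀ i, cs ≤ i → i ≤ ce → ∀ j, cs ≤ j → j ≤ ce → i ≠ j → h i ≠ h j)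
    (HcP : ∀ i, cs ≤ i → i ≤ ce → h i ∉ P)
    (Hedge : ∀ i, cs ≤ i → i < ce → edgeAt G q i (h i) (h (i + 1)))
    (HattL : 100 ≤ ((C.typ cL).filter fun z => edgeAt G q (cs - 1) z (h cs)).card)
    (HattR : 100 ≤ ((C.typ cR).filter fun z => edgeAt G q ce (h ce) z).card)
    (Hred : (List.range 9).filterMap lab = (List.range M).map (altc cH))
    (Hodd : Odd (((Finset.range 9).filter fun i => lab i = none).card)) :
    ∃ g : ℕ → Fin n, PathEmbed G q 8 g ∧
      (∀ i ≤ 8, clM C.A C.B C.S C.T (g i) (lab i)) ∧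
      (∀ i ≤ 8, g i ∉ P) ∧
      repA C.A C.B (vList g 8) = 0 ∧ repB C.A C.B (vList g 8) = 0 ∧
      Odd (((C.S ∪ C.T) ∩ (Finset.range 9).image g).card) := by
  classical
  set CI : Finset (Fin n) := (Finset.Icc cs ce).image h with hCIdef
  have hCIcard : CI.card ≤ 7 := by
    calc CI.card ≤ (Finset.Icc cs ce).card := Finset.card_image_le
      _ = ce + 1 - cs := Nat.card_Icc cs ce
      _ ≤ 7 := by omega
  have hCImem : ∀ i, cs ≤ i → i ≤ ce → h i ∈ CI := by
    intro i h1 h2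
    exact Finset.mem_image.mpr ⟨i, Finset.mem_Icc.mpr ⟨h1, h2⟩, rfl⟩
  -- right attach vertex
  have hbigR : (P ∪ CI).card <
      ((C.typ cR).filter fun z => edgeAt G q ce (h ce) z).card := by
    have := Finset.card_union_le P CI
    omega
  obtain ⟨uR, huRD, huRP⟩ := pick_avoid _ _ hbigR
  simp only [Finset.mem_filter] at huRD
  -- right extension
  obtain ⟨fr, hfr0, hfrcl, hfrP, hfredge, hfrinj⟩ :=
    ext_right C q (ce + 1) (7 - ce) uR cR huRD.1 (P ∪ CI)
      (by have := Finset.card_union_le P CI; omega)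
  set RI : Finset (Fin n) := (Finset.range (7 - ce + 1)).image fr with hRIdef
  have hRIcard : RI.card ≤ 8 := by
    calc RI.card ≤ (Finset.range (7 - ce + 1)).card := Finset.card_image_le
      _ ≤ 8 := by rw [Finset.card_range]; omega
  have hRImem : ∀ j ≤ 7 - ce, fr j ∈ RI := by
    intro j hj
    exact Finset.mem_image.mpr ⟨j, Finset.mem_range.mpr (by omega), rfl⟩
  -- left attach vertex
  have hbigL : (P ∪ CI ∪ RI).card <
      ((C.typ cL).filter fun z => edgeAt G q (cs - 1) z (h cs)).card := by
    have h1 := Finset.card_union_le (P ∪ CI) RI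
    have h2 := Finset.card_union_le P CI
    omega
  obtain ⟨uL, huLD, huLP⟩ := pick_avoid _ _ hbigL
  simp only [Finset.mem_filter] at huLD
  -- left extension
  obtain ⟨fl, hflm, hflcl, hflP, hfledge, hflinj⟩ :=
    ext_left C q (cs - 1) uL cL huLD.1 (P ∪ CI ∪ RI)
      (by
        have h1 := Finset.card_union_le (P ∪ CI) RI
        have h2 := Finset.card_union_le P CI
        omega)
  set g : ℕ → Fin n := fun i => if i < cs then fl i else if i ≤ ce then h i
    else fr (i - (ce + 1)) with hgdef
  have hgL : ∀ i < cs, g i = fl i := by intro i hi; simp [hgdef, hi]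
  have hgC : ∀ i, cs ≤ i → i ≤ ce → g i = h i := by
    intro i h1 h2; simp [hgdef, h1, h2, Nat.not_lt.mpr h1]
  have hgR : ∀ i, ce < i → g i = fr (i - (ce + 1)) := by
    intro i h1
    have : ¬ i < cs := by omega
    have h2 : ¬ i ≤ ce := by omega
    simp [hgdef, this, h2]
  -- avoidance facts
  have hLavoid : ∀ i < cs, g i ∉ P ∪ CI ∪ RI := by
    intro i hi
    rw [hgL i hi]
    by_cases h1 : i = cs - 1
    · rw [h1, hflm]; exact huLP
    · exact hflP i (by omega)
  have hRavoid : ∀ i, ce < i → i ≤ 8 → g i ∉ P ∪ CI := by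
    intro i h1 h2
    rw [hgR i h1]
    by_cases h3 : i - (ce + 1) = 0
    · rw [h3, hfr0]; exact huRP
    · exact hfrP _ (by omega) (by omega)
  -- classes
  have hLcl : ∀ i < cs, g i ∈ C.typ (altc cL (cs - 1 - i)) := by
    intro i hi
    rw [hgL i hi]
    exact hflcl i (by omega)
  have hRcl : ∀ i, ce < i → i ≤ 8 → g i ∈ C.typ (altc cR (i - (ce + 1))) := by
    intro i h1 h2
    rw [hgR i h1]
    exact hfrcl _ (by omega)
  have hcl : ∀ i ≤ 8, clM C.A C.B C.S C.T (g i) (lab i) := by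
    intro i hi
    by_cases h1 : i < cs
    · rw [HlabL i (by omega)]
      exact C.typ_clM (hLcl i h1)
    · by_cases h2 : i ≤ ce
      · rw [hgC i (by omega) h2]
        exact HlabC i (by omega) h2
      · rw [HlabR i (by omega) hi]
        exact C.typ_clM (hRcl i (by omega) hi)
  -- injectivity
  have hginj : ∀ i ≤ 8, ∀ j ≤ 8, i ≠ j → g i ≠ g j := by
    have key : ∀ i ≤ 8, ∀ j ≤ 8, i < j → g i ≠ g j := by
      intro i hi j hj hij
      by_cases hiL : i < cs
      · by_cases hjL : j < cs
        · rw [hgL i hiL, hgL j hjL]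
          exact hflinj i (by omega) j (by omega) (by omega)
        · by_cases hjC : j ≤ ce
          · rw [hgC j (by omega) hjC]
            intro hc
            exact (hLavoid i hiL) (by
              rw [hc]
              exact Finset.mem_union_left _ (Finset.mem_union_right _
                (hCImem j (by omega) hjC)))
          · rw [hgR j (by omega)]
            intro hc
            exact (hLavoid i hiL) (by
              rw [hc]
              exact Finset.mem_union_right _ (hRImem _ (by omega)))
      · by_cases hiC : i ≤ ce
        · by_cases hjC : j ≤ ce
          · rw [hgC i (by omega) hiC, hgC j (by omega) hjC]
            exact Hinj i (by omega) hiC j (by omega) hjC (by omega)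
          · intro hc
            exact (hRavoid j (by omega) hj) (by
              rw [← hc, hgC i (by omega) hiC]
              exact Finset.mem_union_right _ (hCImem i (by omega) hiC))
        · -- both right
          rw [hgR i (by omega), hgR j (by omega)]
          exact hfrinj _ (by omega) _ (by omega) (by omega)
    intro i hi j hj hne
    rcases Nat.lt_or_ge i j with h | h
    · exact key i hi j hj h
    · exact fun hc => key j hj i hi (by omega) hc.symm
  -- edges
  have hedgeAll : ∀ i < 8, edgeAt G q i (g i) (g (i + 1)) := by
    intro i hi
    by_cases h1 : i + 1 < cs
    · rw [hgL i (by omega), hgL (i + 1) h1]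
      exact hfledge i (by omega)
    · by_cases h2 : i = cs - 1
      · rw [hgL i (by omega), hgC (i + 1) (by omega) (by omega)]
        have e1 : i + 1 = cs := by omega
        rw [e1, h2, hflm]
        exact huLD.2
      · by_cases h3 : i < ce
        · rw [hgC i (by omega) (by omega), hgC (i + 1) (by omega) (by omega)]
          exact Hedge i (by omega) h3
        · by_cases h4 : i = ce
          · rw [hgC i (by omega) (by omega), hgR (i + 1) (by omega)]
            have e1 : i + 1 - (ce + 1) = 0 := by omega
            rw [e1, hfr0, h4]
            exact huRD.2
          · rw [hgR i (by omega), hgR (i + 1) (by omega)]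
            have := hfredge (i - (ce + 1)) (by omega)
            have e1 : ce + 1 + (i - (ce + 1)) = i := by omega
            rw [e1] at this
            have e2 : i + 1 - (ce + 1) = i - (ce + 1) + 1 := by omega
            rw [e2]
            exact this
  -- rep counts
  have hfor : List.Forall₂ (labRel C.A C.B) (vList g 8) ((List.range 9).map lab) := by
    rw [vList]
    apply List.forall₂_iff_get.mpr
    refine ⟨by simp, ?_⟩
    intro i h1 h2
    have hi : i < 9 := by simpa using h1
    have hc := hcl i (by omega)
    simp only [List.get_eq_getElem, List.getElem_map, List.getElem_range]
    cases hlab : lab i with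
    | none =>
      rw [hlab] at hc
      exact ⟨hc.2.1, hc.2.2⟩
    | some c =>
      rw [hlab] at hc
      cases c
      · exact ⟨hc.1, hc.2.1⟩
      · exact ⟨hc.1, hc.2.1⟩
  have hreds : ((List.range 9).map lab).reduceOption = (List.range M).map (altc cH) := by
    rw [reduceOption_map_eq]
    exact Hred
  obtain ⟨hrepA, hrepB⟩ := rep_eq_zero C.A C.B _ _ hfor cH M hreds
  -- odd crossing count
  have himg : (C.S ∪ C.T) ∩ (Finset.range 9).image g =
      ((Finset.range 9).filter fun i => lab i = none).image g := by
    ext y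
    simp only [Finset.mem_inter, Finset.mem_image, Finset.mem_filter, Finset.mem_range]
    constructor
    · rintro ⟨hyST, i, hi9, rfl⟩
      refine ⟨i, ⟨hi9, ?_⟩, rfl⟩
      have hc := hcl i (by omega)
      cases hlab : lab i with
      | none => rfl
      | some c =>
        rw [hlab] at hc
        cases c
        · rcases Finset.mem_union.mp hyST with hh | hh
          · exact absurd hh hc.2.2.1
          · exact absurd hh hc.2.2.2
        · rcases Finset.mem_union.mp hyST with hh | hh
          · exact absurd hh hc.2.2.1
          · exact absurd hh hc.2.2.2
    · rintro ⟨i, ⟨hi9, hlab⟩, rfl⟩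
      have hc := hcl i (by omega)
      rw [hlab] at hc
      exact ⟨hc.1, i, hi9, rfl⟩
  have hodd : Odd (((C.S ∪ C.T) ∩ (Finset.range 9).image g).card) := by
    rw [himg, Finset.card_image_of_injOn (by
      intro a ha b hb hab
      simp only [Finset.coe_filter, Set.mem_setOf_eq, Finset.mem_range] at ha hb
      by_contra hne
      exact hginj a (by omega) b (by omega) hne hab)]
    exact Hodd
  refine ⟨g, ⟨?_, ?_⟩, hcl, ?_, hrepA, hrepB, hodd⟩
  · intro a ha b hb heq
    by_contra hne
    exact hginj a (Set.mem_Iic.mp ha) b (Set.mem_Iic.mp hb) hne heq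
  · intro i hi
    have := hedgeAll i hi
    simpa [edgeAt] using this
  · intro i hi
    by_cases h1 : i < cs
    · intro hc
      exact hLavoid i h1 (Finset.mem_union_left _ (Finset.mem_union_left _ hc))
    · by_cases h2 : i ≤ ce
      · rw [hgC i (by omega) h2]
        exact HcP i (by omega) h2
      · intro hc
        exact hRavoid i (by omega) hi (Finset.mem_union_left _ hc)

end Stmt18

namespace Stmt18

variable {n : ℕ} {G : Finset (Fin n × Fin n)}

lemma Ctx.a_clM (C : Ctx n G) {x : Fin n} (h : x ∈ C.A) :
    clM C.A C.B C.S C.T x (some true) :=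
  ⟨h, Finset.disjoint_left.mp C.hAB h, Finset.disjoint_left.mp C.hAS h,
    Finset.disjoint_left.mp C.hAT h⟩

lemma Ctx.b_clM (C : Ctx n G) {x : Fin n} (h : x ∈ C.B) :
    clM C.A C.B C.S C.T x (some false) :=
  ⟨h, Finset.disjoint_right.mp C.hAB h, Finset.disjoint_left.mp C.hBS h,
    Finset.disjoint_left.mp C.hBT h⟩

lemma pack (C : Ctx n G) (q : ℕ → Bool) (side : Bool) (P : Finset (Fin n)) (g : ℕ → Fin n)
    (lab : ℕ → Option Bool) (hl0 : lab 0 = some side) (hl8 : lab 8 = some (!side))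
    (hpe : PathEmbed G q 8 g) (hcl : ∀ i ≤ 8, clM C.A C.B C.S C.T (g i) (lab i))
    (hPa : ∀ i ≤ 8, g i ∉ P) (hra : repA C.A C.B (vList g 8) = 0)
    (hrb : repB C.A C.B (vList g 8) = 0)
    (hodd : Odd (((C.S ∪ C.T) ∩ (Finset.range 9).image g).card)) :
    PathEmbed G q 8 g ∧ (∀ i ≤ 8, g i ∉ P) ∧
      (side = true → UsefulAB C.A C.B C.S C.T 8 g) ∧
      (side = false → UsefulBA C.A C.B C.S C.T 8 g) := by
  refine ⟨hpe, hPa, ?_, ?_⟩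
  · rintro rfl
    have h0 := hcl 0 (by omega)
    rw [hl0] at h0
    have h8 := hcl 8 le_rfl
    rw [hl8] at h8
    exact ⟨h0.1, h8.1, hra, hrb, hodd⟩
  · rintro rfl
    have h0 := hcl 0 (by omega)
    rw [hl0] at h0
    have h8 := hcl 8 le_rfl
    rw [hl8] at h8
    exact ⟨h0.1, h8.1, hra, hrb, hodd⟩

/-- the labelling for a single-crossing path with the crossing at position `k+1`. -/
def labI (side : Bool) (k : ℕ) (i : ℕ) : Option Bool :=
  if i = k + 1 then none
  else some ((decide (if i ≤ k then i % 2 = 0 else i % 2 = 1)) == side)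

lemma parity_beq (k : ℕ) (side : Bool) :
    (decide (k % 2 = 1) == side) = !(decide (k % 2 = 0) == side) := by
  by_cases h : k % 2 = 0
  · have h2 : ¬ k % 2 = 1 := by omega
    simp [h, h2]
  · have h2 : k % 2 = 1 := by omega
    simp [h, h2]

lemma card_pair_le (w v : Fin n) : ({w, v} : Finset (Fin n)).card ≤ 2 := by
  apply le_trans (Finset.card_insert_le _ _)
  simp

lemma buildCaseI (C : Ctx n G) (q : ℕ → Bool) (side : Bool) (k : ℕ) (hk : k ≤ 6)
    (hqk : q (k + 1) = q k) (P : Finset (Fin n)) (hP : P.card ≤ 20) :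
    ∃ g, PathEmbed G q 8 g ∧ (∀ i ≤ 8, g i ∉ P) ∧
      (side = true → UsefulAB C.A C.B C.S C.T 8 g) ∧
      (side = false → UsefulBA C.A C.B C.S C.T 8 g) := by
  classical
  have HlabL : ∀ i ≤ k + 1 - 1,
      labI side k i = some (altc (decide (k % 2 = 0) == side) (k + 1 - 1 - i)) := by
    interval_cases k <;> cases side <;> decide
  have HlabR' : ∀ i ≤ 8, k + 1 + 1 ≤ i →
      labI side k i = some (altc (decide (k % 2 = 1) == side) (i - (k + 1 + 1))) := by
    interval_cases k <;> cases side <;> decide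
  have Hred : (List.range 9).filterMap (labI side k) = (List.range 8).map (altc side) := by
    interval_cases k <;> cases side <;> decide
  have Hodd : Odd (((Finset.range 9).filter fun i => labI side k i = none).card) := by
    interval_cases k <;> cases side <;> decide
  have hl0 : labI side k 0 = some side := by
    interval_cases k <;> cases side <;> decide
  have hl8 : labI side k 8 = some (!side) := by
    interval_cases k <;> cases side <;> decide
  have hlabk1 : labI side k (k + 1) = none := by simp [labI]
  have hcr := parity_beq k side
  -- choose the crossing vertex and attach bounds, by cases
  have main : ∃ v : Fin n, v ∉ P ∧ clM C.A C.B C.S C.T v none ∧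
      (100 ≤ ((C.typ (decide (k % 2 = 0) == side)).filter
        fun z => edgeAt G q (k + 1 - 1) z v).card) ∧
      (100 ≤ ((C.typ (decide (k % 2 = 1) == side)).filter
        fun z => edgeAt G q (k + 1) v z).card) := by
    cases hc : q k <;> cases hcl : (decide (k % 2 = 0) == side)
    · -- q k = false, left class B : v in S'
      obtain ⟨v, hv, hvP⟩ := pick_avoid C.S' P (by have := C.cardS'; omega)
      refine ⟨v, hvP, C.s_clM (C.hS' hv), ?_, ?_⟩
      · simpa [edgeAt, Ctx.typ, Nat.add_sub_cancel, hc] using C.sOutB v hv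
      · simpa [edgeAt, Ctx.typ, hqk, hc, hcr, hcl] using C.sInA v hv
    · -- q k = false, left class A : v in T'
      obtain ⟨v, hv, hvP⟩ := pick_avoid C.T' P (by have := C.cardT'; omega)
      refine ⟨v, hvP, C.t_clM (C.hT' hv), ?_, ?_⟩
      · simpa [edgeAt, Ctx.typ, Nat.add_sub_cancel, hc] using C.tOutA v hv
      · simpa [edgeAt, Ctx.typ, hqk, hc, hcr, hcl] using C.tInB v hv
    · -- q k = true, left class B : v in T'
      obtain ⟨v, hv, hvP⟩ := pick_avoid C.T' P (by have := C.cardT'; omega)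
      refine ⟨v, hvP, C.t_clM (C.hT' hv), ?_, ?_⟩
      · simpa [edgeAt, Ctx.typ, Nat.add_sub_cancel, hc] using C.tInB v hv
      · simpa [edgeAt, Ctx.typ, hqk, hc, hcr, hcl] using C.tOutA v hv
    · -- q k = true, left class A : v in S'
      obtain ⟨v, hv, hvP⟩ := pick_avoid C.S' P (by have := C.cardS'; omega)
      refine ⟨v, hvP, C.s_clM (C.hS' hv), ?_, ?_⟩
      · simpa [edgeAt, Ctx.typ, Nat.add_sub_cancel, hc] using C.sInA v hv
      · simpa [edgeAt, Ctx.typ, hqk, hc, hcr, hcl] using C.sOutB v hv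
  obtain ⟨v, hvP, hvcl, hattL, hattR⟩ := main
  obtain ⟨g, hpe, hcl, hPa, hra, hrb, hodd⟩ :=
    master C q P hP (k + 1) (k + 1) (by omega) le_rfl (by omega)
      (fun _ => v) (labI side k) (decide (k % 2 = 0) == side)
      (decide (k % 2 = 1) == side) side 8
      HlabL
      (fun i h1 h2 => HlabR' i h2 h1)
      (by
        intro i h1 h2
        have : i = k + 1 := by omega
        subst this
        rw [hlabk1]
        exact hvcl)
      (by intro i h1 h2 j h3 h4 hne; omega)
      (by intro i _ _; exact hvP)
      (by intro i h1 h2; omega)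
      hattL
      hattR
      Hred
      Hodd
  exact ⟨g, pack C q side P g (labI side k) hl0 hl8 hpe hcl hPa hra hrb hodd⟩

end Stmt18

namespace Stmt18

variable {n : ℕ} {G : Finset (Fin n × Fin n)}

set_option maxHeartbeats 1000000 in
lemma buildAnti (C : Ctx n G) (q : ℕ → Bool) (hanti : ∀ i ≤ 6, q (i + 1) = !(q i))
    (side : Bool) (w v : Fin n) (hv : v ∈ C.S') (hw : w ∈ C.B ∪ C.T) (hwv : (w, v) ∈ G)
    (P : Finset (Fin n)) (hP : P.card ≤ 18) (hvP : v ∉ P) (hwP : w ∉ P) :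
    ∃ g, PathEmbed G q 8 g ∧ (∀ i ≤ 8, g i ∉ P) ∧
      (side = true → UsefulAB C.A C.B C.S C.T 8 g) ∧
      (side = false → UsefulBA C.A C.B C.S C.T 8 g) := by
  classical
  have e1 : q 1 = !(q 0) := hanti 0 (by omega)
  have e2 : q 2 = !(q 1) := hanti 1 (by omega)
  have e3 : q 3 = !(q 2) := hanti 2 (by omega)
  have e4 : q 4 = !(q 3) := hanti 3 (by omega)
  have hvS : v ∈ C.S := C.hS' hv
  have hwv_ne : w ≠ v := by
    rcases Finset.mem_union.mp hw with h | h
    · intro hh; subst hh; exact Finset.disjoint_left.mp C.hBS h hvS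
    · intro hh; subst hh; exact Finset.disjoint_left.mp C.hST hvS h
  have hvw_ne : v ≠ w := hwv_ne.symm
  rcases Finset.mem_union.mp hw with hwB | hwT
  · -- w ∈ B : single both-in crossing
    cases hσ : q 0
    · -- σ = false
      have f1 : q 1 = true := by simp [e1, hσ]
      have f2 : q 2 = false := by simp [e2, f1]
      have f3 : q 3 = true := by simp [e3, f2]
      have f4 : q 4 = false := by simp [e4, f3]
      cases side
      · -- BA
        have HR : ∀ i ≤ 8, 3 + 1 ≤ i → (fun i => ([some false, some true, none, some false, some true, some false, some true, some false, some true] : List (Option Bool)).getD i none) i = some (altc true (i - (3 + 1))) := by decide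
        obtain ⟨g, hpe, hcl, hPa, hra, hrb, hodd⟩ :=
          master C q P (by omega) 2 3 (by omega) (by omega) (by omega)
            (fun i => if i = 2 then v else w) (fun i => ([some false, some true, none, some false, some true, some false, some true, some false, some true] : List (Option Bool)).getD i none) true true false 8
            (by decide)
            (fun i h1 h2 => HR i h2 h1)
            (by
              intro i h1 h2
              interval_cases i
              · simpa using C.s_clM hvS
              · simpa using C.b_clM hwB
            )
            (by
              intro i hi1 hi2 j hj1 hj2 hne
              interval_cases i <;> interval_cases j <;> (try simp only [reduceIte]) <;> first | omega | assumption)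
            (by intro i h1 h2; interval_cases i <;> (try simp only [reduceIte]) <;> assumption)
            (by
              intro i h1 h2
              interval_cases i
              · simpa [edgeAt, f2] using hwv
            )
            (by simpa [edgeAt, Ctx.typ, f1] using C.sInA v hv)
            (by simpa [edgeAt, Ctx.typ, f3] using C.bOutA w hwB)
            (by decide)
            (by decide)
        exact ⟨g, pack C q _ P g (fun i => ([some false, some true, none, some false, some true, some false, some true, some false, some true] : List (Option Bool)).getD i none) (by decide) (by decide) hpe hcl hPa hra hrb hodd⟩
      · -- AB
        have HR : ∀ i ≤ 8, 2 + 1 ≤ i → (fun i => ([some true, some false, none, some true, some false, some true, some false, some true, some false] : List (Option Bool)).getD i none) i = some (altc true (i - (2 + 1))) := by decide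
        obtain ⟨g, hpe, hcl, hPa, hra, hrb, hodd⟩ :=
          master C q P (by omega) 1 2 (by omega) (by omega) (by omega)
            (fun i => if i = 1 then w else v) (fun i => ([some true, some false, none, some true, some false, some true, some false, some true, some false] : List (Option Bool)).getD i none) true true true 8
            (by decide)
            (fun i h1 h2 => HR i h2 h1)
            (by
              intro i h1 h2
              interval_cases i
              · simpa using C.b_clM hwB
              · simpa using C.s_clM hvS
            )
            (by
              intro i hi1 hi2 j hj1 hj2 hne
              interval_cases i <;> interval_cases j <;> (try simp only [reduceIte]) <;> first | omega | assumption)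
            (by intro i h1 h2; interval_cases i <;> (try simp only [reduceIte]) <;> assumption)
            (by
              intro i h1 h2
              interval_cases i
              · simpa [edgeAt, f1] using hwv
            )
            (by simpa [edgeAt, Ctx.typ, hσ] using C.bOutA w hwB)
            (by simpa [edgeAt, Ctx.typ, f2] using C.sInA v hv)
            (by decide)
            (by decide)
        exact ⟨g, pack C q _ P g (fun i => ([some true, some false, none, some true, some false, some true, some false, some true, some false] : List (Option Bool)).getD i none) (by decide) (by decide) hpe hcl hPa hra hrb hodd⟩
    · -- σ = true
      have f1 : q 1 = false := by simp [e1, hσ]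
      have f2 : q 2 = true := by simp [e2, f1]
      have f3 : q 3 = false := by simp [e3, f2]
      have f4 : q 4 = true := by simp [e4, f3]
      cases side
      · -- BA
        have HR : ∀ i ≤ 8, 3 + 1 ≤ i → (fun i => ([some false, some true, some false, none, some true, some false, some true, some false, some true] : List (Option Bool)).getD i none) i = some (altc true (i - (3 + 1))) := by decide
        obtain ⟨g, hpe, hcl, hPa, hra, hrb, hodd⟩ :=
          master C q P (by omega) 2 3 (by omega) (by omega) (by omega)
            (fun i => if i = 2 then w else v) (fun i => ([some false, some true, some false, none, some true, some false, some true, some false, some true] : List (Option Bool)).getD i none) true true false 8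
            (by decide)
            (fun i h1 h2 => HR i h2 h1)
            (by
              intro i h1 h2
              interval_cases i
              · simpa using C.b_clM hwB
              · simpa using C.s_clM hvS
            )
            (by
              intro i hi1 hi2 j hj1 hj2 hne
              interval_cases i <;> interval_cases j <;> (try simp only [reduceIte]) <;> first | omega | assumption)
            (by intro i h1 h2; interval_cases i <;> (try simp only [reduceIte]) <;> assumption)
            (by
              intro i h1 h2
              interval_cases i
              · simpa [edgeAt, f2] using hwv
            )
            (by simpa [edgeAt, Ctx.typ, f1] using C.bOutA w hwB)
            (by simpa [edgeAt, Ctx.typ, f3] using C.sInA v hv)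
            (by decide)
            (by decide)
        exact ⟨g, pack C q _ P g (fun i => ([some false, some true, some false, none, some true, some false, some true, some false, some true] : List (Option Bool)).getD i none) (by decide) (by decide) hpe hcl hPa hra hrb hodd⟩
      · -- AB
        have HR : ∀ i ≤ 8, 2 + 1 ≤ i → (fun i => ([some true, none, some false, some true, some false, some true, some false, some true, some false] : List (Option Bool)).getD i none) i = some (altc true (i - (2 + 1))) := by decide
        obtain ⟨g, hpe, hcl, hPa, hra, hrb, hodd⟩ :=
          master C q P (by omega) 1 2 (by omega) (by omega) (by omega)
            (fun i => if i = 1 then v else w) (fun i => ([some true, none, some false, some true, some false, some true, some false, some true, some false] : List (Option Bool)).getD i none) true true true 8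
            (by decide)
            (fun i h1 h2 => HR i h2 h1)
            (by
              intro i h1 h2
              interval_cases i
              · simpa using C.s_clM hvS
              · simpa using C.b_clM hwB
            )
            (by
              intro i hi1 hi2 j hj1 hj2 hne
              interval_cases i <;> interval_cases j <;> (try simp only [reduceIte]) <;> first | omega | assumption)
            (by intro i h1 h2; interval_cases i <;> (try simp only [reduceIte]) <;> assumption)
            (by
              intro i h1 h2
              interval_cases i
              · simpa [edgeAt, f1] using hwv
            )
            (by simpa [edgeAt, Ctx.typ, hσ] using C.sInA v hv)
            (by simpa [edgeAt, Ctx.typ, f2] using C.bOutA w hwB)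
            (by decide)
            (by decide)
        exact ⟨g, pack C q _ P g (fun i => ([some true, none, some false, some true, some false, some true, some false, some true, some false] : List (Option Bool)).getD i none) (by decide) (by decide) hpe hcl hPa hra hrb hodd⟩
  · -- w ∈ T
    have hsplit := C.tOut2 w hwT
    by_cases hA2 : 100 ≤ (C.A'.filter fun z => (w, z) ∈ G).card
    · -- T2 : w has many out-neighbours in A'
      have hbig : (P ∪ {w, v}).card < (C.S'.filter fun z => (z, v) ∈ G).card := by
        have h1 := Finset.card_union_le P ({w, v} : Finset (Fin n))
        have h2 := card_pair_le w v
        have h3 := C.sInS v hv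
        omega
      obtain ⟨z', hz'm, hz'P⟩ := pick_avoid _ _ hbig
      simp only [Finset.mem_filter] at hz'm
      have hz'S : z' ∈ C.S' := hz'm.1
      have hz'v : (z', v) ∈ G := hz'm.2
      have hz'notP : z' ∉ P := fun h => hz'P (Finset.mem_union_left _ h)
      have hz'w : z' ≠ w := fun h => hz'P (Finset.mem_union_right _ (by simp [h]))
      have hwz' : w ≠ z' := fun h => hz'w h.symm
      have hz'vne : z' ≠ v := fun h => hz'P (Finset.mem_union_right _ (by simp [h]))
      have hvz' : v ≠ z' := fun h => hz'vne h.symm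
      cases hσ : q 0
      · -- σ = false
        have f1 : q 1 = true := by simp [e1, hσ]
        have f2 : q 2 = false := by simp [e2, f1]
        have f3 : q 3 = true := by simp [e3, f2]
        have f4 : q 4 = false := by simp [e4, f3]
        cases side
        · -- BA
          have HR : ∀ i ≤ 8, 3 + 1 ≤ i → (fun i => ([some false, none, none, none, some true, some false, some true, some false, some true] : List (Option Bool)).getD i none) i = some (altc true (i - (3 + 1))) := by decide
          obtain ⟨g, hpe, hcl, hPa, hra, hrb, hodd⟩ :=
            master C q P (by omega) 1 3 (by omega) (by omega) (by omega)
              (fun i => if i = 1 then z' else if i = 2 then v else w) (fun i => ([some false, none, none, none, some true, some false, some true, some false, some true] : List (Option Bool)).getD i none) false true false 6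
              (by decide)
              (fun i h1 h2 => HR i h2 h1)
              (by
                intro i h1 h2
                interval_cases i
                · simpa using C.s_clM (C.hS' hz'S)
                · simpa using C.s_clM hvS
                · simpa using C.t_clM hwT
              )
              (by
                intro i hi1 hi2 j hj1 hj2 hne
                interval_cases i <;> interval_cases j <;> (try simp only [reduceIte]) <;> first | omega | assumption)
              (by intro i h1 h2; interval_cases i <;> (try simp only [reduceIte]) <;> assumption)
              (by
                intro i h1 h2
                interval_cases i
                · simpa [edgeAt, f1] using hz'v
                · simpa [edgeAt, f2] using hwv
              )
              (by simpa [edgeAt, Ctx.typ, hσ] using C.sOutB z' hz'S)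
              (by simpa [edgeAt, Ctx.typ, f3] using hA2)
              (by decide)
              (by decide)
          exact ⟨g, pack C q _ P g (fun i => ([some false, none, none, none, some true, some false, some true, some false, some true] : List (Option Bool)).getD i none) (by decide) (by decide) hpe hcl hPa hra hrb hodd⟩
        · -- AB
          have HR : ∀ i ≤ 8, 3 + 1 ≤ i → (fun i => ([some true, none, none, none, some false, some true, some false, some true, some false] : List (Option Bool)).getD i none) i = some (altc false (i - (3 + 1))) := by decide
          obtain ⟨g, hpe, hcl, hPa, hra, hrb, hodd⟩ :=
            master C q P (by omega) 1 3 (by omega) (by omega) (by omega)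
              (fun i => if i = 1 then w else if i = 2 then v else z') (fun i => ([some true, none, none, none, some false, some true, some false, some true, some false] : List (Option Bool)).getD i none) true false true 6
              (by decide)
              (fun i h1 h2 => HR i h2 h1)
              (by
                intro i h1 h2
                interval_cases i
                · simpa using C.t_clM hwT
                · simpa using C.s_clM hvS
                · simpa using C.s_clM (C.hS' hz'S)
              )
              (by
                intro i hi1 hi2 j hj1 hj2 hne
                interval_cases i <;> interval_cases j <;> (try simp only [reduceIte]) <;> first | omega | assumption)
              (by intro i h1 h2; interval_cases i <;> (try simp only [reduceIte]) <;> assumption)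
              (by
                intro i h1 h2
                interval_cases i
                · simpa [edgeAt, f1] using hwv
                · simpa [edgeAt, f2] using hz'v
              )
              (by simpa [edgeAt, Ctx.typ, hσ] using hA2)
              (by simpa [edgeAt, Ctx.typ, f3] using C.sOutB z' hz'S)
              (by decide)
              (by decide)
          exact ⟨g, pack C q _ P g (fun i => ([some true, none, none, none, some false, some true, some false, some true, some false] : List (Option Bool)).getD i none) (by decide) (by decide) hpe hcl hPa hra hrb hodd⟩
      · -- σ = true
        have f1 : q 1 = false := by simp [e1, hσ]
        have f2 : q 2 = true := by simp [e2, f1]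
        have f3 : q 3 = false := by simp [e3, f2]
        have f4 : q 4 = true := by simp [e4, f3]
        cases side
        · -- BA
          have HR : ∀ i ≤ 8, 4 + 1 ≤ i → (fun i => ([some false, some true, none, none, none, some false, some true, some false, some true] : List (Option Bool)).getD i none) i = some (altc false (i - (4 + 1))) := by decide
          obtain ⟨g, hpe, hcl, hPa, hra, hrb, hodd⟩ :=
            master C q P (by omega) 2 4 (by omega) (by omega) (by omega)
              (fun i => if i = 2 then w else if i = 3 then v else z') (fun i => ([some false, some true, none, none, none, some false, some true, some false, some true] : List (Option Bool)).getD i none) true false false 6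
              (by decide)
              (fun i h1 h2 => HR i h2 h1)
              (by
                intro i h1 h2
                interval_cases i
                · simpa using C.t_clM hwT
                · simpa using C.s_clM hvS
                · simpa using C.s_clM (C.hS' hz'S)
              )
              (by
                intro i hi1 hi2 j hj1 hj2 hne
                interval_cases i <;> interval_cases j <;> (try simp only [reduceIte]) <;> first | omega | assumption)
              (by intro i h1 h2; interval_cases i <;> (try simp only [reduceIte]) <;> assumption)
              (by
                intro i h1 h2
                interval_cases i
                · simpa [edgeAt, f2] using hwv
                · simpa [edgeAt, f3] using hz'v
              )
              (by simpa [edgeAt, Ctx.typ, f1] using hA2)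
              (by simpa [edgeAt, Ctx.typ, f4] using C.sOutB z' hz'S)
              (by decide)
              (by decide)
          exact ⟨g, pack C q _ P g (fun i => ([some false, some true, none, none, none, some false, some true, some false, some true] : List (Option Bool)).getD i none) (by decide) (by decide) hpe hcl hPa hra hrb hodd⟩
        · -- AB
          have HR : ∀ i ≤ 8, 4 + 1 ≤ i → (fun i => ([some true, some false, none, none, none, some true, some false, some true, some false] : List (Option Bool)).getD i none) i = some (altc true (i - (4 + 1))) := by decide
          obtain ⟨g, hpe, hcl, hPa, hra, hrb, hodd⟩ :=
            master C q P (by omega) 2 4 (by omega) (by omega) (by omega)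
              (fun i => if i = 2 then z' else if i = 3 then v else w) (fun i => ([some true, some false, none, none, none, some true, some false, some true, some false] : List (Option Bool)).getD i none) false true true 6
              (by decide)
              (fun i h1 h2 => HR i h2 h1)
              (by
                intro i h1 h2
                interval_cases i
                · simpa using C.s_clM (C.hS' hz'S)
                · simpa using C.s_clM hvS
                · simpa using C.t_clM hwT
              )
              (by
                intro i hi1 hi2 j hj1 hj2 hne
                interval_cases i <;> interval_cases j <;> (try simp only [reduceIte]) <;> first | omega | assumption)
              (by intro i h1 h2; interval_cases i <;> (try simp only [reduceIte]) <;> assumption)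
              (by
                intro i h1 h2
                interval_cases i
                · simpa [edgeAt, f2] using hz'v
                · simpa [edgeAt, f3] using hwv
              )
              (by simpa [edgeAt, Ctx.typ, f1] using C.sOutB z' hz'S)
              (by simpa [edgeAt, Ctx.typ, f4] using hA2)
              (by decide)
              (by decide)
          exact ⟨g, pack C q _ P g (fun i => ([some true, some false, none, none, none, some true, some false, some true, some false] : List (Option Bool)).getD i none) (by decide) (by decide) hpe hcl hPa hra hrb hodd⟩
    · -- T3 : w has many out-neighbours in T'
      have hT3 : 100 ≤ (C.T'.filter fun z => (w, z) ∈ G).card := by omega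
      have hbig : (P ∪ {w, v}).card < (C.T'.filter fun z => (w, z) ∈ G).card := by
        have h1 := Finset.card_union_le P ({w, v} : Finset (Fin n))
        have h2 := card_pair_le w v
        omega
      obtain ⟨t, htm, htP⟩ := pick_avoid _ _ hbig
      simp only [Finset.mem_filter] at htm
      have htT : t ∈ C.T' := htm.1
      have hwt : (w, t) ∈ G := htm.2
      have htnotP : t ∉ P := fun h => htP (Finset.mem_union_left _ h)
      have htw : t ≠ w := fun h => htP (Finset.mem_union_right _ (by simp [h]))
      have hwtne : w ≠ t := fun h => htw h.symm
      have htv : t ≠ v := fun h => htP (Finset.mem_union_right _ (by simp [h]))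
      have hvt : v ≠ t := fun h => htv h.symm
      cases hσ : q 0
      · -- σ = false
        have f1 : q 1 = true := by simp [e1, hσ]
        have f2 : q 2 = false := by simp [e2, f1]
        have f3 : q 3 = true := by simp [e3, f2]
        have f4 : q 4 = false := by simp [e4, f3]
        cases side
        · -- BA
          have HR : ∀ i ≤ 8, 4 + 1 ≤ i → (fun i => ([some false, some true, none, none, none, some false, some true, some false, some true] : List (Option Bool)).getD i none) i = some (altc false (i - (4 + 1))) := by decide
          obtain ⟨g, hpe, hcl, hPa, hra, hrb, hodd⟩ :=
            master C q P (by omega) 2 4 (by omega) (by omega) (by omega)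
              (fun i => if i = 2 then v else if i = 3 then w else t) (fun i => ([some false, some true, none, none, none, some false, some true, some false, some true] : List (Option Bool)).getD i none) true false false 6
              (by decide)
              (fun i h1 h2 => HR i h2 h1)
              (by
                intro i h1 h2
                interval_cases i
                · simpa using C.s_clM hvS
                · simpa using C.t_clM hwT
                · simpa using C.t_clM (C.hT' htT)
              )
              (by
                intro i hi1 hi2 j hj1 hj2 hne
                interval_cases i <;> interval_cases j <;> (try simp only [reduceIte]) <;> first | omega | assumption)
              (by intro i h1 h2; interval_cases i <;> (try simp only [reduceIte]) <;> assumption)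
              (by
                intro i h1 h2
                interval_cases i
                · simpa [edgeAt, f2] using hwv
                · simpa [edgeAt, f3] using hwt
              )
              (by simpa [edgeAt, Ctx.typ, f1] using C.sInA v hv)
              (by simpa [edgeAt, Ctx.typ, f4] using C.tInB t htT)
              (by decide)
              (by decide)
          exact ⟨g, pack C q _ P g (fun i => ([some false, some true, none, none, none, some false, some true, some false, some true] : List (Option Bool)).getD i none) (by decide) (by decide) hpe hcl hPa hra hrb hodd⟩
        · -- AB
          have HR : ∀ i ≤ 8, 4 + 1 ≤ i → (fun i => ([some true, some false, none, none, none, some true, some false, some true, some false] : List (Option Bool)).getD i none) i = some (altc true (i - (4 + 1))) := by decide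
          obtain ⟨g, hpe, hcl, hPa, hra, hrb, hodd⟩ :=
            master C q P (by omega) 2 4 (by omega) (by omega) (by omega)
              (fun i => if i = 2 then t else if i = 3 then w else v) (fun i => ([some true, some false, none, none, none, some true, some false, some true, some false] : List (Option Bool)).getD i none) false true true 6
              (by decide)
              (fun i h1 h2 => HR i h2 h1)
              (by
                intro i h1 h2
                interval_cases i
                · simpa using C.t_clM (C.hT' htT)
                · simpa using C.t_clM hwT
                · simpa using C.s_clM hvS
              )
              (by
                intro i hi1 hi2 j hj1 hj2 hne
                interval_cases i <;> interval_cases j <;> (try simp only [reduceIte]) <;> first | omega | assumption)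
              (by intro i h1 h2; interval_cases i <;> (try simp only [reduceIte]) <;> assumption)
              (by
                intro i h1 h2
                interval_cases i
                · simpa [edgeAt, f2] using hwt
                · simpa [edgeAt, f3] using hwv
              )
              (by simpa [edgeAt, Ctx.typ, f1] using C.tInB t htT)
              (by simpa [edgeAt, Ctx.typ, f4] using C.sInA v hv)
              (by decide)
              (by decide)
          exact ⟨g, pack C q _ P g (fun i => ([some true, some false, none, none, none, some true, some false, some true, some false] : List (Option Bool)).getD i none) (by decide) (by decide) hpe hcl hPa hra hrb hodd⟩
      · -- σ = true
        have f1 : q 1 = false := by simp [e1, hσ]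
        have f2 : q 2 = true := by simp [e2, f1]
        have f3 : q 3 = false := by simp [e3, f2]
        have f4 : q 4 = true := by simp [e4, f3]
        cases side
        · -- BA
          have HR : ∀ i ≤ 8, 3 + 1 ≤ i → (fun i => ([some false, none, none, none, some true, some false, some true, some false, some true] : List (Option Bool)).getD i none) i = some (altc true (i - (3 + 1))) := by decide
          obtain ⟨g, hpe, hcl, hPa, hra, hrb, hodd⟩ :=
            master C q P (by omega) 1 3 (by omega) (by omega) (by omega)
              (fun i => if i = 1 then t else if i = 2 then w else v) (fun i => ([some false, none, none, none, some true, some false, some true, some false, some true] : List (Option Bool)).getD i none) false true false 6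
              (by decide)
              (fun i h1 h2 => HR i h2 h1)
              (by
                intro i h1 h2
                interval_cases i
                · simpa using C.t_clM (C.hT' htT)
                · simpa using C.t_clM hwT
                · simpa using C.s_clM hvS
              )
              (by
                intro i hi1 hi2 j hj1 hj2 hne
                interval_cases i <;> interval_cases j <;> (try simp only [reduceIte]) <;> first | omega | assumption)
              (by intro i h1 h2; interval_cases i <;> (try simp only [reduceIte]) <;> assumption)
              (by
                intro i h1 h2
                interval_cases i
                · simpa [edgeAt, f1] using hwt
                · simpa [edgeAt, f2] using hwv
              )
              (by simpa [edgeAt, Ctx.typ, hσ] using C.tInB t htT)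
              (by simpa [edgeAt, Ctx.typ, f3] using C.sInA v hv)
              (by decide)
              (by decide)
          exact ⟨g, pack C q _ P g (fun i => ([some false, none, none, none, some true, some false, some true, some false, some true] : List (Option Bool)).getD i none) (by decide) (by decide) hpe hcl hPa hra hrb hodd⟩
        · -- AB
          have HR : ∀ i ≤ 8, 3 + 1 ≤ i → (fun i => ([some true, none, none, none, some false, some true, some false, some true, some false] : List (Option Bool)).getD i none) i = some (altc false (i - (3 + 1))) := by decide
          obtain ⟨g, hpe, hcl, hPa, hra, hrb, hodd⟩ :=
            master C q P (by omega) 1 3 (by omega) (by omega) (by omega)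
              (fun i => if i = 1 then v else if i = 2 then w else t) (fun i => ([some true, none, none, none, some false, some true, some false, some true, some false] : List (Option Bool)).getD i none) true false true 6
              (by decide)
              (fun i h1 h2 => HR i h2 h1)
              (by
                intro i h1 h2
                interval_cases i
                · simpa using C.s_clM hvS
                · simpa using C.t_clM hwT
                · simpa using C.t_clM (C.hT' htT)
              )
              (by
                intro i hi1 hi2 j hj1 hj2 hne
                interval_cases i <;> interval_cases j <;> (try simp only [reduceIte]) <;> first | omega | assumption)
              (by intro i h1 h2; interval_cases i <;> (try simp only [reduceIte]) <;> assumption)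
              (by
                intro i h1 h2
                interval_cases i
                · simpa [edgeAt, f1] using hwv
                · simpa [edgeAt, f2] using hwt
              )
              (by simpa [edgeAt, Ctx.typ, hσ] using C.sInA v hv)
              (by simpa [edgeAt, Ctx.typ, f3] using C.tInB t htT)
              (by decide)
              (by decide)
          exact ⟨g, pack C q _ P g (fun i => ([some true, none, none, none, some false, some true, some false, some true, some false] : List (Option Bool)).getD i none) (by decide) (by decide) hpe hcl hPa hra hrb hodd⟩

end Stmt18

namespace Stmt18

variable {n : ℕ} {G : Finset (Fin n × Fin n)}

lemma repA_BA (A B : Finset (Fin n)) (l : List (Fin n)) : repA B A l = repB A B l := by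
  simp only [repA, repB, Finset.union_comm B A]

lemma repB_BA (A B : Finset (Fin n)) (l : List (Fin n)) : repB B A l = repA A B l := by
  simp only [repA, repB, Finset.union_comm B A]

lemma usefulBA_of_swap {A B S T : Finset (Fin n)} {g : ℕ → Fin n}
    (h : UsefulAB B A T S 8 g) : UsefulBA A B S T 8 g := by
  obtain ⟨h0, h8, hra, hrb, hodd⟩ := h
  refine ⟨h0, h8, ?_, ?_, ?_⟩
  · rw [← repB_BA]; exact hrb
  · rw [← repA_BA]; exact hra
  · rwa [Finset.union_comm T S] at hodd

lemma usefulAB_of_swap {A B S T : Finset (Fin n)} {g : ℕ → Fin n}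
    (h : UsefulBA B A T S 8 g) : UsefulAB A B S T 8 g := by
  obtain ⟨h0, h8, hra, hrb, hodd⟩ := h
  refine ⟨h0, h8, ?_, ?_, ?_⟩
  · rw [← repB_BA]; exact hrb
  · rw [← repA_BA]; exact hra
  · rwa [Finset.union_comm T S] at hodd

lemma buildAntiSwapped (C : Ctx n G) (q : ℕ → Bool) (hanti : ∀ i ≤ 6, q (i + 1) = !(q i))
    (side : Bool) (w v : Fin n) (hv : v ∈ C.T') (hw : w ∈ C.A ∪ C.S) (hwv : (w, v) ∈ G)
    (P : Finset (Fin n)) (hP : P.card ≤ 18) (hvP : v ∉ P) (hwP : w ∉ P) :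
    ∃ g, PathEmbed G q 8 g ∧ (∀ i ≤ 8, g i ∉ P) ∧
      (side = true → UsefulAB C.A C.B C.S C.T 8 g) ∧
      (side = false → UsefulBA C.A C.B C.S C.T 8 g) := by
  obtain ⟨g, h1, h2, h3, h4⟩ := buildAnti C.swap q hanti (!side) w v hv hw hwv P hP hvP hwP
  refine ⟨g, h1, h2, ?_, ?_⟩
  · rintro rfl
    exact usefulAB_of_swap (h4 rfl)
  · rintro rfl
    exact usefulBA_of_swap (h3 rfl)

end Stmt18

namespace Stmt18

variable {n : ℕ} {G : Finset (Fin n × Fin n)}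

set_option maxHeartbeats 1000000 in
lemma finalAssembly (C : Ctx n G)
    (fact1 : ∀ v ∈ C.S', 1 ≤ ((C.B ∪ C.T).filter fun w => (w, v) ∈ G).card)
    (fact1T : ∀ v ∈ C.S', ((C.B ∪ C.T).filter fun w => (w, v) ∈ G).card ≤ 1 →
      ∀ u ∈ C.T', 1 ≤ ((C.A ∪ C.S).filter fun w => (w, u) ∈ G).card)
    (q₁ q₂ : ℕ → Bool) (b₁ b₂ : Bool) :
    ∃ g₁ g₂ : ℕ → Fin n,
      PathEmbed G q₁ 8 g₁ ∧ PathEmbed G q₂ 8 g₂ ∧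
      (∀ i ≤ 8, ∀ j ≤ 8, g₁ i ≠ g₂ j) ∧
      (b₁ = true → UsefulAB C.A C.B C.S C.T 8 g₁) ∧
      (b₁ = false → UsefulBA C.A C.B C.S C.T 8 g₁) ∧
      (b₂ = true → UsefulAB C.A C.B C.S C.T 8 g₂) ∧
      (b₂ = false → UsefulBA C.A C.B C.S C.T 8 g₂) := by
  classical
  have himg9 : ∀ g : ℕ → Fin n, ((Finset.range 9).image g).card ≤ 9 := fun g =>
    le_trans Finset.card_image_le (by simp)
  have notinimg : ∀ (g : ℕ → Fin n) (Q : Finset (Fin n)) (x : Fin n),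
      (∀ i ≤ 8, g i ∉ Q) → x ∈ Q → x ∉ (Finset.range 9).image g := by
    intro g Q x hg hx hmem
    obtain ⟨i, hi, hgi⟩ := Finset.mem_image.mp hmem
    have hi8 : i ≤ 8 := by have := Finset.mem_range.mp hi; omega
    exact hg i hi8 (by rw [hgi]; exact hx)
  have mkanti : ∀ q : ℕ → Bool, (¬ ∃ k ≤ 6, q (k + 1) = q k) → ∀ i ≤ 6, q (i + 1) = !(q i) := by
    intro q hq i hi
    have h : ¬ q (i + 1) = q i := fun h' => hq ⟨i, hi, h'⟩
    revert h
    cases q (i + 1) <;> cases q i <;> simp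
  have hSnotBT : ∀ x ∈ C.S, x ∉ C.B ∪ C.T := by
    intro x hx h
    rcases Finset.mem_union.mp h with h | h
    · exact Finset.disjoint_left.mp C.hBS h hx
    · exact Finset.disjoint_left.mp C.hST hx h
  have hASBT : ∀ x ∈ C.A ∪ C.S, x ∉ C.B ∪ C.T := by
    intro x hx h
    rcases Finset.mem_union.mp hx with h1 | h1 <;> rcases Finset.mem_union.mp h with h2 | h2
    · exact Finset.disjoint_left.mp C.hAB h1 h2
    · exact Finset.disjoint_left.mp C.hAT h1 h2
    · exact Finset.disjoint_left.mp C.hBS h2 h1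
    · exact Finset.disjoint_left.mp C.hST h1 h2
  by_cases h1 : ∃ k ≤ 6, q₁ (k + 1) = q₁ k
  · by_cases h2 : ∃ k ≤ 6, q₂ (k + 1) = q₂ k
    · -- both non-antidirected
      obtain ⟨k1, hk1, he1⟩ := h1
      obtain ⟨k2, hk2, he2⟩ := h2
      obtain ⟨g1, hp1, hP1, hu1, hu1'⟩ := buildCaseI C q₁ b₁ k1 hk1 he1 ∅ (by simp)
      obtain ⟨g2, hp2, hP2, hu2, hu2'⟩ := buildCaseI C q₂ b₂ k2 hk2 he2
        ((Finset.range 9).image g1) (le_trans (himg9 g1) (by omega))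
      refine ⟨g1, g2, hp1, hp2, ?_, hu1, hu1', hu2, hu2'⟩
      intro i hi j hj heq
      exact hP2 j hj (Finset.mem_image.mpr ⟨i, Finset.mem_range.mpr (by omega), heq⟩)
    · -- q₂ antidirected
      have hanti2 := mkanti q₂ h2
      obtain ⟨va, hva, -⟩ := pick_avoid C.S' ∅
        (by have := C.cardS'; simp only [Finset.card_empty]; omega)
      have h1a := fact1 va hva
      obtain ⟨wa, hwa⟩ := Finset.card_pos.mp (by omega :
        0 < ((C.B ∪ C.T).filter fun w => (w, va) ∈ G).card)
      obtain ⟨hwaBT, hwaG⟩ := Finset.mem_filter.mp hwa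
      obtain ⟨g2, hp2, hP2, hu2, hu2'⟩ := buildAnti C q₂ hanti2 b₂ wa va hva hwaBT hwaG
        ∅ (by simp) (Finset.notMem_empty _) (Finset.notMem_empty _)
      obtain ⟨k1, hk1, he1⟩ := h1
      obtain ⟨g1, hp1, hP1, hu1, hu1'⟩ := buildCaseI C q₁ b₁ k1 hk1 he1
        ((Finset.range 9).image g2) (le_trans (himg9 g2) (by omega))
      refine ⟨g1, g2, hp1, hp2, ?_, hu1, hu1', hu2, hu2'⟩
      intro i hi j hj heq
      exact hP1 i hi (Finset.mem_image.mpr ⟨j, Finset.mem_range.mpr (by omega), heq.symm⟩)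
  · -- q₁ antidirected
    have hanti1 := mkanti q₁ h1
    by_cases h2 : ∃ k ≤ 6, q₂ (k + 1) = q₂ k
    · obtain ⟨va, hva, -⟩ := pick_avoid C.S' ∅
        (by have := C.cardS'; simp only [Finset.card_empty]; omega)
      have h1a := fact1 va hva
      obtain ⟨wa, hwa⟩ := Finset.card_pos.mp (by omega :
        0 < ((C.B ∪ C.T).filter fun w => (w, va) ∈ G).card)
      obtain ⟨hwaBT, hwaG⟩ := Finset.mem_filter.mp hwa
      obtain ⟨g1, hp1, hP1, hu1, hu1'⟩ := buildAnti C q₁ hanti1 b₁ wa va hva hwaBT hwaG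
        ∅ (by simp) (Finset.notMem_empty _) (Finset.notMem_empty _)
      obtain ⟨k2, hk2, he2⟩ := h2
      obtain ⟨g2, hp2, hP2, hu2, hu2'⟩ := buildCaseI C q₂ b₂ k2 hk2 he2
        ((Finset.range 9).image g1) (le_trans (himg9 g1) (by omega))
      refine ⟨g1, g2, hp1, hp2, ?_, hu1, hu1', hu2, hu2'⟩
      intro i hi j hj heq
      exact hP2 j hj (Finset.mem_image.mpr ⟨i, Finset.mem_range.mpr (by omega), heq⟩)
    · -- both antidirected
      have hanti2 := mkanti q₂ h2
      obtain ⟨va, hva, -⟩ := pick_avoid C.S' ∅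
        (by have := C.cardS'; simp only [Finset.card_empty]; omega)
      have h1a := fact1 va hva
      obtain ⟨wa, hwa⟩ := Finset.card_pos.mp (by omega :
        0 < ((C.B ∪ C.T).filter fun w => (w, va) ∈ G).card)
      obtain ⟨hwaBT, hwaG⟩ := Finset.mem_filter.mp hwa
      obtain ⟨vb, hvb, hvbP⟩ := pick_avoid C.S' {va, wa}
        (by have := C.cardS'; have := card_pair_le va wa; omega)
      have hvbva : vb ≠ va := fun h => hvbP (by simp [h])
      have hvbwa : vb ≠ wa := fun h => hvbP (by simp [h])
      by_cases hwb : ∃ w, w ∈ (C.B ∪ C.T).filter (fun w => (w, vb) ∈ G) ∧ w ≠ wa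
      · -- two disjoint cores, both S-side
        obtain ⟨wb, hwbm, hwbne⟩ := hwb
        obtain ⟨hwbBT, hwbG⟩ := Finset.mem_filter.mp hwbm
        have hvawb : va ≠ wb := fun h => hSnotBT va (C.hS' hva) (by rw [h]; exact hwbBT)
        have hvavb : va ≠ vb := hvbva.symm
        have hwawb : wa ≠ wb := hwbne.symm
        have hwavb : wa ≠ vb := hvbwa.symm
        obtain ⟨g1, hp1, hP1, hu1, hu1'⟩ := buildAnti C q₁ hanti1 b₁ wa va hva hwaBT hwaG
          {wb, vb} (le_trans (card_pair_le _ _) (by omega))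
          (by simp [hvawb, hvavb]) (by simp [hwawb, hwavb])
        obtain ⟨g2, hp2, hP2, hu2, hu2'⟩ := buildAnti C q₂ hanti2 b₂ wb vb hvb hwbBT hwbG
          ((Finset.range 9).image g1) (le_trans (himg9 g1) (by omega))
          (notinimg g1 _ vb hP1 (by simp)) (notinimg g1 _ wb hP1 (by simp))
        refine ⟨g1, g2, hp1, hp2, ?_, hu1, hu1', hu2, hu2'⟩
        intro i hi j hj heq
        exact hP2 j hj (Finset.mem_image.mpr ⟨i, Finset.mem_range.mpr (by omega), heq⟩)
      · -- degenerate: vb's only in-neighbour in B ∪ T is wa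
        push_neg at hwb
        have hposb := fact1 vb hvb
        obtain ⟨w0, hw0⟩ := Finset.card_pos.mp (by omega :
          0 < ((C.B ∪ C.T).filter fun w => (w, vb) ∈ G).card)
        have hw0' := Finset.mem_filter.mp hw0
        have hw0wa : w0 = wa := hwb w0 hw0
        have hwaG2 : (wa, vb) ∈ G := by rw [← hw0wa]; exact hw0'.2
        have hle1 : ((C.B ∪ C.T).filter fun w => (w, vb) ∈ G).card ≤ 1 :=
          Finset.card_le_one.mpr (fun x hx y hy => by rw [hwb x hx, hwb y hy])
        have hfT := fact1T vb hvb hle1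
        obtain ⟨vc, hvc, hvcP⟩ := pick_avoid C.T' {wa, vb}
          (by have := C.cardT'; have := card_pair_le wa vb; omega)
        have hvcwa : vc ≠ wa := fun h => hvcP (by simp [h])
        have hvcvb : vc ≠ vb := fun h => hvcP (by simp [h])
        by_cases hwc : ∃ w, w ∈ (C.A ∪ C.S).filter (fun w => (w, vc) ∈ G) ∧ w ≠ vb
        · -- T-side core (wc, vc) and S-side core (wa, vb)
          obtain ⟨wc, hwcm, hwcne⟩ := hwc
          obtain ⟨hwcAS, hwcG⟩ := Finset.mem_filter.mp hwcm
          have hwcwa : wc ≠ wa := fun h => hASBT wc hwcAS (by rw [h]; exact hwaBT)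
          obtain ⟨g1, hp1, hP1, hu1, hu1'⟩ := buildAntiSwapped C q₁ hanti1 b₁ wc vc hvc
            hwcAS hwcG {wa, vb} (le_trans (card_pair_le _ _) (by omega))
            (by simp [hvcwa, hvcvb]) (by simp [hwcwa, hwcne])
          obtain ⟨g2, hp2, hP2, hu2, hu2'⟩ := buildAnti C q₂ hanti2 b₂ wa vb hvb hwaBT hwaG2
            ((Finset.range 9).image g1) (le_trans (himg9 g1) (by omega))
            (notinimg g1 _ vb hP1 (by simp)) (notinimg g1 _ wa hP1 (by simp))
          refine ⟨g1, g2, hp1, hp2, ?_, hu1, hu1', hu2, hu2'⟩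
          intro i hi j hj heq
          exact hP2 j hj (Finset.mem_image.mpr ⟨i, Finset.mem_range.mpr (by omega), heq⟩)
        · -- vc's only in-neighbour in A ∪ S is vb
          push_neg at hwc
          have hposc := hfT vc hvc
          obtain ⟨w1, hw1⟩ := Finset.card_pos.mp (by omega :
            0 < ((C.A ∪ C.S).filter fun w => (w, vc) ∈ G).card)
          have hw1' := Finset.mem_filter.mp hw1
          have hw1vb : w1 = vb := hwc w1 hw1
          have hvbvcG : (vb, vc) ∈ G := by rw [← hw1vb]; exact hw1'.2
          obtain ⟨vd, hvd, hvdP⟩ := pick_avoid C.S' {vb, vc, wa}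
            (by
              have := C.cardS'
              have h3 : ({vb, vc, wa} : Finset (Fin n)).card ≤ 3 :=
                le_trans (Finset.card_insert_le _ _) (by have := card_pair_le vc wa; omega)
              omega)
          have hvdvb : vd ≠ vb := fun h => hvdP (by simp [h])
          have hvdvc : vd ≠ vc := fun h => hvdP (by simp [h])
          have hvdwa : vd ≠ wa := fun h => hvdP (by simp [h])
          by_cases hwd : ∃ w, w ∈ (C.B ∪ C.T).filter (fun w => (w, vd) ∈ G) ∧ w ≠ vc
          · -- T-side core (vb, vc) and S-side core (wd, vd)
            obtain ⟨wd, hwdm, hwdne⟩ := hwd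
            obtain ⟨hwdBT, hwdG⟩ := Finset.mem_filter.mp hwdm
            have hvbAS : vb ∈ C.A ∪ C.S := Finset.mem_union_right _ (C.hS' hvb)
            have hvcwd : vc ≠ wd := hwdne.symm
            have hvbwd : vb ≠ wd := fun h => hSnotBT vb (C.hS' hvb) (by rw [h]; exact hwdBT)
            have hvbvd : vb ≠ vd := hvdvb.symm
            have hvcvd : vc ≠ vd := hvdvc.symm
            obtain ⟨g1, hp1, hP1, hu1, hu1'⟩ := buildAntiSwapped C q₁ hanti1 b₁ vb vc hvc
              hvbAS hvbvcG {wd, vd} (le_trans (card_pair_le _ _) (by omega))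
              (by simp [hvcwd, hvcvd]) (by simp [hvbwd, hvbvd])
            obtain ⟨g2, hp2, hP2, hu2, hu2'⟩ := buildAnti C q₂ hanti2 b₂ wd vd hvd hwdBT hwdG
              ((Finset.range 9).image g1) (le_trans (himg9 g1) (by omega))
              (notinimg g1 _ vd hP1 (by simp)) (notinimg g1 _ wd hP1 (by simp))
            refine ⟨g1, g2, hp1, hp2, ?_, hu1, hu1', hu2, hu2'⟩
            intro i hi j hj heq
            exact hP2 j hj (Finset.mem_image.mpr ⟨i, Finset.mem_range.mpr (by omega), heq⟩)
          · -- S-side cores (wa, vb) and (vc, vd)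
            push_neg at hwd
            have hposd := fact1 vd hvd
            obtain ⟨w2, hw2⟩ := Finset.card_pos.mp (by omega :
              0 < ((C.B ∪ C.T).filter fun w => (w, vd) ∈ G).card)
            have hw2' := Finset.mem_filter.mp hw2
            have hw2vc : w2 = vc := hwd w2 hw2
            have hvcvdG : (vc, vd) ∈ G := by rw [← hw2vc]; exact hw2'.2
            have hvbvc : vb ≠ vc := hvcvb.symm
            have hvbvd : vb ≠ vd := hvdvb.symm
            have hwavc : wa ≠ vc := hvcwa.symm
            have hwavd : wa ≠ vd := hvdwa.symm
            obtain ⟨g1, hp1, hP1, hu1, hu1'⟩ := buildAnti C q₁ hanti1 b₁ wa vb hvb hwaBT hwaG2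
              {vc, vd} (le_trans (card_pair_le _ _) (by omega))
              (by simp [hvbvc, hvbvd]) (by simp [hwavc, hwavd])
            have hvcBT : vc ∈ C.B ∪ C.T := Finset.mem_union_right _ (C.hT' hvc)
            obtain ⟨g2, hp2, hP2, hu2, hu2'⟩ := buildAnti C q₂ hanti2 b₂ vc vd hvd hvcBT hvcvdG
              ((Finset.range 9).image g1) (le_trans (himg9 g1) (by omega))
              (notinimg g1 _ vd hP1 (by simp)) (notinimg g1 _ vc hP1 (by simp))
            refine ⟨g1, g2, hp1, hp2, ?_, hu1, hu1', hu2, hu2'⟩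
            intro i hi j hj heq
            exact hP2 j hj (Finset.mem_image.mpr ⟨i, Finset.mem_range.mpr (by omega), heq⟩)

end Stmt18

set_option maxHeartbeats 1000000 in
/-- given an `ABST`-extremal partition and any two oriented paths `q₁, q₂`
of length `8`, `G` contains disjoint useful copies of them, where for each one may
prescribe (via `b₁, b₂`) whether the copy is an `AB`-path or a `BA`-path. -/
theorem stmt_18 :
    ∃ τmax : ℝ, 0 < τmax ∧ ∀ τ : ℝ, 0 < τ → τ ≤ τmax →
    ∃ η₁max : ℝ, 0 < η₁max ∧ ∀ η₁ : ℝ, 0 < η₁ → η₁ ≤ η₁max →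
    ∃ ε₁max : ℝ, 0 < ε₁max ∧ ∀ ε₁ : ℝ, 0 < ε₁ → ε₁ ≤ ε₁max →
    ∃ εmax : ℝ, 0 < εmax ∧ ∀ ε : ℝ, 0 < ε → ε ≤ εmax →
    ∃ n₀ : ℕ, ∀ n : ℕ, n₀ ≤ n →
    ∀ G : Finset (Fin n × Fin n), (∀ e ∈ G, e.1 ≠ e.2) →
      MinSemi G ((n : ℝ) / 2) →
      ∀ A B S T : Finset (Fin n), Partition4 A B S T → R0 A B S T →
        Rconds G A B S T ε ε₁ η₁ τ →
      ∀ q₁ q₂ : ℕ → Bool, ∀ b₁ b₂ : Bool,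
      ∃ g₁ g₂ : ℕ → Fin n,
        PathEmbed G q₁ 8 g₁ ∧ PathEmbed G q₂ 8 g₂ ∧
        (∀ i ≤ 8, ∀ j ≤ 8, g₁ i ≠ g₂ j) ∧
        (b₁ = true → UsefulAB A B S T 8 g₁) ∧ (b₁ = false → UsefulBA A B S T 8 g₁) ∧
        (b₂ = true → UsefulAB A B S T 8 g₂) ∧ (b₂ = false → UsefulBA A B S T 8 g₂) := by
  classical
  refine ⟨1, one_pos, fun τ hτ _ => ?_⟩
  refine ⟨1, one_pos, fun η₁ hη₁ _ => ?_⟩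
  refine ⟨min (τ / 8) (η₁ / 8), lt_min (by positivity) (by positivity), fun ε₁ hε₁ hε₁m => ?_⟩
  refine ⟨(τ / 8) ^ 3, by positivity, fun ε hε hεm => ?_⟩
  refine ⟨⌈(1000 : ℝ) / η₁⌉₊ + ⌈(1000 : ℝ) / τ⌉₊ + 1, fun n hn => ?_⟩
  intro G hloop hmin A B S T hpart hR0 hRc q₁ q₂ b₁ b₂
  obtain ⟨hpartU, hAB, hAS, hAT, hBS, hBT, hST⟩ := hpart
  obtain ⟨⟨hR1A, hR1B, hR1S, hR1T⟩, -, ⟨hR3A, hR3B⟩, hR4, hR5, hR6, hR7, hR8, hR9⟩ := hRc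
  obtain ⟨hR0ab, hR0st⟩ := hR0
  -- basic numerics
  have hn0 : (0:ℝ) ≤ (n:ℝ) := Nat.cast_nonneg n
  have hnτ : (1000:ℝ) ≤ τ * n := by
    have h1 : ((⌈(1000:ℝ)/τ⌉₊ : ℕ) : ℝ) ≤ (n:ℝ) := Nat.cast_le.mpr (by omega)
    have h3 : (1000:ℝ)/τ ≤ (n:ℝ) := le_trans (Nat.le_ceil _) h1
    have h4 : (1000:ℝ)/τ * τ ≤ (n:ℝ) * τ := mul_le_mul_of_nonneg_right h3 (le_of_lt hτ)
    rw [div_mul_cancel₀ _ (ne_of_gt hτ)] at h4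
    linarith
  have hnη : (1000:ℝ) ≤ η₁ * n := by
    have h1 : ((⌈(1000:ℝ)/η₁⌉₊ : ℕ) : ℝ) ≤ (n:ℝ) := Nat.cast_le.mpr (by omega)
    have h3 : (1000:ℝ)/η₁ ≤ (n:ℝ) := le_trans (Nat.le_ceil _) h1
    have h4 : (1000:ℝ)/η₁ * η₁ ≤ (n:ℝ) * η₁ := mul_le_mul_of_nonneg_right h3 (le_of_lt hη₁)
    rw [div_mul_cancel₀ _ (ne_of_gt hη₁)] at h4
    linarith
  have hρb : ε ^ ((1:ℝ)/3) ≤ τ / 8 := by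
    have h1 : ε ^ ((1:ℝ)/3) ≤ ((τ/8)^3) ^ ((1:ℝ)/3) :=
      Real.rpow_le_rpow (le_of_lt hε) hεm (by norm_num)
    have h2 : (((τ/8)^3 : ℝ)) ^ ((1:ℝ)/3) = τ/8 := by
      rw [← Real.rpow_natCast (τ/8) 3, ← Real.rpow_mul (by positivity)]
      norm_num
    rw [h2] at h1
    exact h1
  have hρ0 : (0:ℝ) ≤ ε ^ ((1:ℝ)/3) := Real.rpow_nonneg (le_of_lt hε) _
  have hε₁τ : ε₁ ≤ τ / 8 := le_trans hε₁m (min_le_left _ _)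
  have hε₁η : ε₁ ≤ η₁ / 8 := le_trans hε₁m (min_le_right _ _)
  have hε₁0 : (0:ℝ) ≤ ε₁ := le_of_lt hε₁
  set ρ := ε ^ ((1:ℝ)/3) with hρdef
  -- numeric gap closers
  have hgap : ∀ m : ℕ, τ * n - ρ * n - ε₁ * n ≤ (m:ℝ) → 100 ≤ m := by
    intro m hm
    have e1 : ρ * n ≤ τ/8 * n := mul_le_mul_of_nonneg_right hρb hn0
    have e2 : ε₁ * n ≤ τ/8 * n := mul_le_mul_of_nonneg_right hε₁τ hn0
    have e3 : τ/8 * n = (τ * n)/8 := by ring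
    have : (100:ℝ) ≤ (m:ℝ) := by linarith
    exact_mod_cast this
  have hgapη : ∀ m : ℕ, η₁ * n - ε₁ * n ≤ (m:ℝ) → 100 ≤ m := by
    intro m hm
    have e2 : ε₁ * n ≤ η₁/8 * n := mul_le_mul_of_nonneg_right hε₁η hn0
    have e3 : η₁/8 * n = (η₁ * n)/8 := by ring
    have : (100:ℝ) ≤ (m:ℝ) := by linarith
    exact_mod_cast this
  have hgapη2 : ∀ m k : ℕ, η₁ * n - ε₁ * n - ε₁ * n ≤ (m:ℝ) + (k:ℝ) → 200 ≤ m + k := by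
    intro m k hm
    have e2 : ε₁ * n ≤ η₁/8 * n := mul_le_mul_of_nonneg_right hε₁η hn0
    have e3 : η₁/8 * n = (η₁ * n)/8 := by ring
    have : (200:ℝ) ≤ (m:ℝ) + (k:ℝ) := by linarith
    have : (200:ℝ) ≤ ((m + k : ℕ) : ℝ) := by push_cast; linarith
    exact_mod_cast this
  -- typical sets
  set A' := A.filter (fun x => (B.card : ℝ) - ρ * n ≤ (dPlus G B x : ℝ) ∧
      (B.card : ℝ) - ρ * n ≤ (dMinus G B x : ℝ)) with hA'def
  set B' := B.filter (fun x => (A.card : ℝ) - ρ * n ≤ (dPlus G A x : ℝ) ∧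
      (A.card : ℝ) - ρ * n ≤ (dMinus G A x : ℝ)) with hB'def
  set S' := S.filter (fun x =>
      (B.card : ℝ) + (S.card : ℝ) - ρ * n ≤ (dPlus G (B ∪ S) x : ℝ) ∧
      (A.card : ℝ) + (S.card : ℝ) - ρ * n ≤ (dMinus G (A ∪ S) x : ℝ)) with hS'def
  set T' := T.filter (fun x =>
      (A.card : ℝ) + (T.card : ℝ) - ρ * n ≤ (dPlus G (A ∪ T) x : ℝ) ∧
      (B.card : ℝ) + (T.card : ℝ) - ρ * n ≤ (dMinus G (B ∪ T) x : ℝ)) with hT'def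
  have hA'sub : A' ⊆ A := Finset.filter_subset _ _
  have hB'sub : B' ⊆ B := Finset.filter_subset _ _
  have hS'sub : S' ⊆ S := Finset.filter_subset _ _
  have hT'sub : T' ⊆ T := Finset.filter_subset _ _
  have hbadA : ((A \ A').card : ℝ) ≤ ε₁ * n := by
    rw [hA'def, ← Finset.filter_not]
    exact hR6
  have hbadB : ((B \ B').card : ℝ) ≤ ε₁ * n := by
    rw [hB'def, ← Finset.filter_not]
    exact hR7
  have hbadS : ((S \ S').card : ℝ) ≤ ε₁ * n := by
    rw [hS'def, ← Finset.filter_not]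
    exact hR8
  have hbadT : ((T \ T').card : ℝ) ≤ ε₁ * n := by
    rw [hT'def, ← Finset.filter_not]
    exact hR9
  have cardle : ∀ (X X' : Finset (Fin n)), X' ⊆ X → (((X \ X').card : ℝ) ≤ ε₁ * n) →
      (X.card : ℝ) - ε₁ * n ≤ (X'.card : ℝ) := by
    intro X X' hs hb
    have h1 : (X \ X').card = X.card - X'.card := Finset.card_sdiff_of_subset hs
    have h2 : X'.card ≤ X.card := Finset.card_le_card hs
    have h3 : ((X \ X').card : ℝ) = (X.card : ℝ) - (X'.card : ℝ) := by
      rw [h1, Nat.cast_sub h2]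
    linarith
  have cardS'100 : 100 ≤ S'.card := by
    apply hgap
    have := cardle S S' hS'sub hbadS
    linarith [hR1S, hρ0, mul_nonneg hρ0 hn0]
  have cardT'100 : 100 ≤ T'.card := by
    apply hgap
    have := cardle T T' hT'sub hbadT
    linarith [hR1T, mul_nonneg hρ0 hn0]
  -- degree helpers
  have hdMu : ∀ (X Y : Finset (Fin n)) (v : Fin n), Disjoint X Y →
      dMinus G (X ∪ Y) v = dMinus G X v + dMinus G Y v := by
    intro X Y v h
    rw [Stmt18.dMinus_eq, Stmt18.dMinus_eq, Stmt18.dMinus_eq, Finset.filter_union]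
    exact Finset.card_union_of_disjoint (Finset.disjoint_filter_filter h)
  have hdPu : ∀ (X Y : Finset (Fin n)) (v : Fin n), Disjoint X Y →
      dPlus G (X ∪ Y) v = dPlus G X v + dPlus G Y v := by
    intro X Y v h
    rw [Stmt18.dPlus_eq, Stmt18.dPlus_eq, Stmt18.dPlus_eq, Finset.filter_union]
    exact Finset.card_union_of_disjoint (Finset.disjoint_filter_filter h)
  have hdMle : ∀ (X : Finset (Fin n)) (v : Fin n), dMinus G X v ≤ X.card := by
    intro X v
    rw [Stmt18.dMinus_eq]
    exact Finset.card_filter_le _ _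
  have hdPle : ∀ (X : Finset (Fin n)) (v : Fin n), dPlus G X v ≤ X.card := by
    intro X v
    rw [Stmt18.dPlus_eq]
    exact Finset.card_filter_le _ _
  -- Ctx fields
  have stepA : ∀ x ∈ A', ∀ d : Bool,
      100 ≤ (B'.filter fun y => if d then (x, y) ∈ G else (y, x) ∈ G).card := by
    intro x hx d
    rw [hA'def] at hx
    obtain ⟨hxA, hdP, hdM⟩ := Finset.mem_filter.mp hx
    cases d
    · simp only [Bool.false_eq_true, if_false]
      apply hgap
      have h2 := Stmt18.keyle B B' (fun y => (y, x) ∈ G) hB'sub hbadB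
      rw [Stmt18.dMinus_eq] at hdM
      linarith [hR1B]
    · simp only [if_true]
      apply hgap
      have h2 := Stmt18.keyle B B' (fun y => (x, y) ∈ G) hB'sub hbadB
      rw [Stmt18.dPlus_eq] at hdP
      linarith [hR1B]
  have stepB : ∀ x ∈ B', ∀ d : Bool,
      100 ≤ (A'.filter fun y => if d then (x, y) ∈ G else (y, x) ∈ G).card := by
    intro x hx d
    rw [hB'def] at hx
    obtain ⟨hxB, hdP, hdM⟩ := Finset.mem_filter.mp hx
    cases d
    · simp only [Bool.false_eq_true, if_false]
      apply hgap
      have h2 := Stmt18.keyle A A' (fun y => (y, x) ∈ G) hA'sub hbadA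
      rw [Stmt18.dMinus_eq] at hdM
      linarith [hR1A]
    · simp only [if_true]
      apply hgap
      have h2 := Stmt18.keyle A A' (fun y => (x, y) ∈ G) hA'sub hbadA
      rw [Stmt18.dPlus_eq] at hdP
      linarith [hR1A]
  have sInA : ∀ v ∈ S', 100 ≤ (A'.filter fun z => (z, v) ∈ G).card := by
    intro v hv
    rw [hS'def] at hv
    obtain ⟨hvS, hdP8, hdM8⟩ := Finset.mem_filter.mp hv
    apply hgap
    have h2 := Stmt18.keyle A A' (fun z => (z, v) ∈ G) hA'sub hbadA
    have hsplit : (dMinus G (A ∪ S) v : ℝ) = (dMinus G A v : ℝ) + (dMinus G S v : ℝ) := by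
      exact_mod_cast hdMu A S v hAS
    have hle : (dMinus G S v : ℝ) ≤ (S.card : ℝ) := by exact_mod_cast hdMle S v
    rw [Stmt18.dMinus_eq G A v] at hsplit
    linarith [hR1A]
  have sInS : ∀ v ∈ S', 100 ≤ (S'.filter fun z => (z, v) ∈ G).card := by
    intro v hv
    rw [hS'def] at hv
    obtain ⟨hvS, hdP8, hdM8⟩ := Finset.mem_filter.mp hv
    apply hgap
    have h2 := Stmt18.keyle S S' (fun z => (z, v) ∈ G) hS'sub hbadS
    have hsplit : (dMinus G (A ∪ S) v : ℝ) = (dMinus G A v : ℝ) + (dMinus G S v : ℝ) := by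
      exact_mod_cast hdMu A S v hAS
    have hle : (dMinus G A v : ℝ) ≤ (A.card : ℝ) := by exact_mod_cast hdMle A v
    rw [Stmt18.dMinus_eq G S v] at hsplit
    linarith [hR1S]
  have sOutB : ∀ v ∈ S', 100 ≤ (B'.filter fun z => (v, z) ∈ G).card := by
    intro v hv
    rw [hS'def] at hv
    obtain ⟨hvS, hdP8, hdM8⟩ := Finset.mem_filter.mp hv
    apply hgap
    have h2 := Stmt18.keyle B B' (fun z => (v, z) ∈ G) hB'sub hbadB
    have hsplit : (dPlus G (B ∪ S) v : ℝ) = (dPlus G B v : ℝ) + (dPlus G S v : ℝ) := by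
      exact_mod_cast hdPu B S v hBS
    have hle : (dPlus G S v : ℝ) ≤ (S.card : ℝ) := by exact_mod_cast hdPle S v
    rw [Stmt18.dPlus_eq G B v] at hsplit
    linarith [hR1B]
  have sOutS : ∀ v ∈ S', 100 ≤ (S'.filter fun z => (v, z) ∈ G).card := by
    intro v hv
    rw [hS'def] at hv
    obtain ⟨hvS, hdP8, hdM8⟩ := Finset.mem_filter.mp hv
    apply hgap
    have h2 := Stmt18.keyle S S' (fun z => (v, z) ∈ G) hS'sub hbadS
    have hsplit : (dPlus G (B ∪ S) v : ℝ) = (dPlus G B v : ℝ) + (dPlus G S v : ℝ) := by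
      exact_mod_cast hdPu B S v hBS
    have hle : (dPlus G B v : ℝ) ≤ (B.card : ℝ) := by exact_mod_cast hdPle B v
    rw [Stmt18.dPlus_eq G S v] at hsplit
    linarith [hR1S]
  have tInB : ∀ v ∈ T', 100 ≤ (B'.filter fun z => (z, v) ∈ G).card := by
    intro v hv
    rw [hT'def] at hv
    obtain ⟨hvT, hdP9, hdM9⟩ := Finset.mem_filter.mp hv
    apply hgap
    have h2 := Stmt18.keyle B B' (fun z => (z, v) ∈ G) hB'sub hbadB
    have hsplit : (dMinus G (B ∪ T) v : ℝ) = (dMinus G B v : ℝ) + (dMinus G T v : ℝ) := by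
      exact_mod_cast hdMu B T v hBT
    have hle : (dMinus G T v : ℝ) ≤ (T.card : ℝ) := by exact_mod_cast hdMle T v
    rw [Stmt18.dMinus_eq G B v] at hsplit
    linarith [hR1B]
  have tInT : ∀ v ∈ T', 100 ≤ (T'.filter fun z => (z, v) ∈ G).card := by
    intro v hv
    rw [hT'def] at hv
    obtain ⟨hvT, hdP9, hdM9⟩ := Finset.mem_filter.mp hv
    apply hgap
    have h2 := Stmt18.keyle T T' (fun z => (z, v) ∈ G) hT'sub hbadT
    have hsplit : (dMinus G (B ∪ T) v : ℝ) = (dMinus G B v : ℝ) + (dMinus G T v : ℝ) := by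
      exact_mod_cast hdMu B T v hBT
    have hle : (dMinus G B v : ℝ) ≤ (B.card : ℝ) := by exact_mod_cast hdMle B v
    rw [Stmt18.dMinus_eq G T v] at hsplit
    linarith [hR1T]
  have tOutA : ∀ v ∈ T', 100 ≤ (A'.filter fun z => (v, z) ∈ G).card := by
    intro v hv
    rw [hT'def] at hv
    obtain ⟨hvT, hdP9, hdM9⟩ := Finset.mem_filter.mp hv
    apply hgap
    have h2 := Stmt18.keyle A A' (fun z => (v, z) ∈ G) hA'sub hbadA
    have hsplit : (dPlus G (A ∪ T) v : ℝ) = (dPlus G A v : ℝ) + (dPlus G T v : ℝ) := by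
      exact_mod_cast hdPu A T v hAT
    have hle : (dPlus G T v : ℝ) ≤ (T.card : ℝ) := by exact_mod_cast hdPle T v
    rw [Stmt18.dPlus_eq G A v] at hsplit
    linarith [hR1A]
  have tOutT : ∀ v ∈ T', 100 ≤ (T'.filter fun z => (v, z) ∈ G).card := by
    intro v hv
    rw [hT'def] at hv
    obtain ⟨hvT, hdP9, hdM9⟩ := Finset.mem_filter.mp hv
    apply hgap
    have h2 := Stmt18.keyle T T' (fun z => (v, z) ∈ G) hT'sub hbadT
    have hsplit : (dPlus G (A ∪ T) v : ℝ) = (dPlus G A v : ℝ) + (dPlus G T v : ℝ) := by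
      exact_mod_cast hdPu A T v hAT
    have hle : (dPlus G A v : ℝ) ≤ (A.card : ℝ) := by exact_mod_cast hdPle A v
    rw [Stmt18.dPlus_eq G T v] at hsplit
    linarith [hR1T]
  have bOutA : ∀ w ∈ B, 100 ≤ (A'.filter fun z => (w, z) ∈ G).card := by
    intro w hw
    apply hgapη
    have h2 := Stmt18.keyle A A' (fun z => (w, z) ∈ G) hA'sub hbadA
    have h3 := (hR3B w hw).1
    rw [Stmt18.dPlus_eq] at h3
    linarith
  have aOutB : ∀ w ∈ A, 100 ≤ (B'.filter fun z => (w, z) ∈ G).card := by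
    intro w hw
    apply hgapη
    have h2 := Stmt18.keyle B B' (fun z => (w, z) ∈ G) hB'sub hbadB
    have h3 := (hR3A w hw).1
    rw [Stmt18.dPlus_eq] at h3
    linarith
  have sOut2 : ∀ w ∈ S,
      200 ≤ (B'.filter fun z => (w, z) ∈ G).card + (S'.filter fun z => (w, z) ∈ G).card := by
    intro w hw
    apply hgapη2
    have h2 := Stmt18.keyle B B' (fun z => (w, z) ∈ G) hB'sub hbadB
    have h3 := Stmt18.keyle S S' (fun z => (w, z) ∈ G) hS'sub hbadS
    have h4 := (hR4 w hw).1
    have hsplit : (dPlus G (B ∪ S) w : ℝ) = (dPlus G B w : ℝ) + (dPlus G S w : ℝ) := by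
      exact_mod_cast hdPu B S w hBS
    rw [Stmt18.dPlus_eq G B w, Stmt18.dPlus_eq G S w] at hsplit
    linarith
  have tOut2 : ∀ w ∈ T,
      200 ≤ (A'.filter fun z => (w, z) ∈ G).card + (T'.filter fun z => (w, z) ∈ G).card := by
    intro w hw
    apply hgapη2
    have h2 := Stmt18.keyle A A' (fun z => (w, z) ∈ G) hA'sub hbadA
    have h3 := Stmt18.keyle T T' (fun z => (w, z) ∈ G) hT'sub hbadT
    have h4 := (hR5 w hw).1
    have hsplit : (dPlus G (A ∪ T) w : ℝ) = (dPlus G A w : ℝ) + (dPlus G T w : ℝ) := by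
      exact_mod_cast hdPu A T w hAT
    rw [Stmt18.dPlus_eq G A w, Stmt18.dPlus_eq G T w] at hsplit
    linarith
  -- cardinal identities and facts from the minimum semidegree
  have hdABS_T : Disjoint (A ∪ B ∪ S) T := by
    rw [Finset.disjoint_union_left, Finset.disjoint_union_left]
    exact ⟨⟨hAT, hBT⟩, hST⟩
  have hdAB_S : Disjoint (A ∪ B) S := Finset.disjoint_union_left.mpr ⟨hAS, hBS⟩
  have hcards : A.card + B.card + S.card + T.card = n := by
    have h1 : (A ∪ B ∪ S ∪ T).card = n := by rw [hpartU]; exact Finset.card_fin n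
    rw [Finset.card_union_of_disjoint hdABS_T, Finset.card_union_of_disjoint hdAB_S,
      Finset.card_union_of_disjoint hAB] at h1
    exact h1
  have hASBT : Disjoint (A ∪ S) (B ∪ T) := by
    rw [Finset.disjoint_union_left]
    constructor
    · rw [Finset.disjoint_union_right]; exact ⟨hAB, hAT⟩
    · rw [Finset.disjoint_union_right]; exact ⟨hBS.symm, hST⟩
  have hUnionAll : (A ∪ S) ∪ (B ∪ T) = Finset.univ := by
    rw [← hpartU]
    ext x
    simp only [Finset.mem_union]
    tauto
  have hdMsplit2 : ∀ v : Fin n, dMinus G Finset.univ v = dMinus G (A ∪ S) v + dMinus G (B ∪ T) v := by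
    intro v
    rw [← hUnionAll]
    exact hdMu _ _ v hASBT
  have hdM_AS_le : ∀ v ∈ S, dMinus G (A ∪ S) v ≤ A.card + S.card - 1 := by
    intro v hv
    rw [Stmt18.dMinus_eq]
    have hsub : (A ∪ S).filter (fun u => (u, v) ∈ G) ⊆ (A ∪ S).erase v := by
      intro u hu
      obtain ⟨huAS, huG⟩ := Finset.mem_filter.mp hu
      exact Finset.mem_erase.mpr ⟨hloop (u, v) huG, huAS⟩
    calc _ ≤ ((A ∪ S).erase v).card := Finset.card_le_card hsub
      _ = (A ∪ S).card - 1 := Finset.card_erase_of_mem (Finset.mem_union_right _ hv)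
      _ = A.card + S.card - 1 := by rw [Finset.card_union_of_disjoint hAS]
  have hdM_BT_le : ∀ v ∈ T, dMinus G (B ∪ T) v ≤ B.card + T.card - 1 := by
    intro v hv
    rw [Stmt18.dMinus_eq]
    have hsub : (B ∪ T).filter (fun u => (u, v) ∈ G) ⊆ (B ∪ T).erase v := by
      intro u hu
      obtain ⟨huBT, huG⟩ := Finset.mem_filter.mp hu
      exact Finset.mem_erase.mpr ⟨hloop (u, v) huG, huBT⟩
    calc _ ≤ ((B ∪ T).erase v).card := Finset.card_le_card hsub
      _ = (B ∪ T).card - 1 := Finset.card_erase_of_mem (Finset.mem_union_right _ hv)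
      _ = B.card + T.card - 1 := by rw [Finset.card_union_of_disjoint hBT]
  have hm2 : ∀ v : Fin n, n ≤ 2 * dMinus G Finset.univ v := by
    intro v
    have h := (hmin v).2
    have : (n:ℝ) ≤ 2 * (dMinus G Finset.univ v : ℝ) := by linarith
    exact_mod_cast this
  have fact1 : ∀ v ∈ S', 1 ≤ ((B ∪ T).filter fun w => (w, v) ∈ G).card := by
    intro v hv
    have hvS : v ∈ S := hS'sub hv
    have hsp := hdMsplit2 v
    have hle := hdM_AS_le v hvS
    have hm2v := hm2 v
    have hBT : dMinus G (B ∪ T) v = ((B ∪ T).filter fun w => (w, v) ∈ G).card :=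
      Stmt18.dMinus_eq G (B ∪ T) v
    have hScard : 1 ≤ S.card := Finset.card_pos.mpr ⟨v, hvS⟩
    omega
  have fact1T : ∀ v ∈ S', ((B ∪ T).filter fun w => (w, v) ∈ G).card ≤ 1 →
      ∀ u ∈ T', 1 ≤ ((A ∪ S).filter fun w => (w, u) ∈ G).card := by
    intro v hv hle1 u hu
    have hvS : v ∈ S := hS'sub hv
    have huT : u ∈ T := hT'sub hu
    have hsp := hdMsplit2 v
    have hlev := hdM_AS_le v hvS
    have hm2v := hm2 v
    have hBTv : dMinus G (B ∪ T) v = ((B ∪ T).filter fun w => (w, v) ∈ G).card :=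
      Stmt18.dMinus_eq G (B ∪ T) v
    have hScard : 1 ≤ S.card := Finset.card_pos.mpr ⟨v, hvS⟩
    -- exactness: 2 * (B.card + T.card) = n
    have h2bt : 2 * (B.card + T.card) = n := by omega
    have hspu := hdMsplit2 u
    have hleu := hdM_BT_le u huT
    have hm2u := hm2 u
    have hASu : dMinus G (A ∪ S) u = ((A ∪ S).filter fun w => (w, u) ∈ G).card :=
      Stmt18.dMinus_eq G (A ∪ S) u
    have hTcard : 1 ≤ T.card := Finset.card_pos.mpr ⟨u, huT⟩
    omega
  exact Stmt18.finalAssembly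
    { A := A, B := B, S := S, T := T, A' := A', B' := B', S' := S', T' := T',
      hA' := hA'sub, hB' := hB'sub, hS' := hS'sub, hT' := hT'sub,
      hAB := hAB, hAS := hAS, hAT := hAT, hBS := hBS, hBT := hBT, hST := hST,
      cardS' := cardS'100, cardT' := cardT'100,
      stepA := stepA, stepB := stepB, sInA := sInA, sInS := sInS, sOutB := sOutB,
      sOutS := sOutS, tInB := tInB, tInT := tInT, tOutA := tOutA, tOutT := tOutT,
      bOutA := bOutA, aOutB := aOutB, sOut2 := sOut2, tOut2 := tOut2 }
    fact1 fact1T q₁ q₂ b₁ b₂
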